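/- arXiv:2210.01494 — 4 statements merged into one kernel-verified Lean document; each statement's English description precedes it below -/
import Mathlib

section
/- For fixed t ∈ (0,1), K ∈ ℝ and N > 1, the distortion coefficient θ ↦ τ_{K,N}^{(t)}(θ) := t^{1/N} · σ_{K,N-1}^{(t)}(θ)^{1-1/N} is nondecreasing in θ if K ≥ 0 and nonincreasing in θ if K < 0. -/
open MeasureTheory Metric Set Filter Bornology
open scoped ENNReal NNReal

noncomputable section

/-- The distortion coefficient `σ_{K,N}^{(t)}(θ)`, valued in `ℝ≥0∞` (it is `+∞` when
`N π² ≤ K θ²`). -/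
def sigmaC (K N t θ : ℝ) : ℝ≥0∞ :=
  if K = 0 ∨ θ = 0 then ENNReal.ofReal t
  else if N * Real.pi ^ 2 ≤ K * θ ^ 2 then ⊤
  else if 0 < K then
    ENNReal.ofReal (Real.sin (t * θ * Real.sqrt (K / N)) / Real.sin (θ * Real.sqrt (K / N)))
  else
    ENNReal.ofReal (Real.sinh (t * θ * Real.sqrt (-K / N)) / Real.sinh (θ * Real.sqrt (-K / N)))

/-- The distortion coefficient `τ_{K,N}^{(t)}(θ) = t^{1/N} σ_{K,N-1}^{(t)}(θ)^{1-1/N}`. -/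
def tauC (K N t θ : ℝ) : ℝ≥0∞ :=
  ENNReal.ofReal t ^ (1 / N) * sigmaC K (N - 1) t θ ^ (1 - 1 / N)

/-- Extension of `τ_{K,N}^{(t)}` to extended-real arguments (as needed when the distance
`Θ(A,B)` may be infinite). -/
def tauE (K N t : ℝ) (θ : ℝ≥0∞) : ℝ≥0∞ :=
  if θ = ⊤ then (if K < 0 then 0 else if K = 0 then ENNReal.ofReal t else ⊤)
  else tauC K N t θ.toReal

variable {X : Type*} [MetricSpace X] [MeasurableSpace X] [BorelSpace X]

/-- The support of a measure: points all of whose neighbourhoods have positive measure. -/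
def mspt (μ : Measure X) : Set X := {x : X | ∀ ε > (0:ℝ), 0 < μ (Metric.ball x ε)}

/-- `π` is an admissible transport plan (coupling) between `μ` and `ν`. -/
def IsCoupling (μ ν : Measure X) (π : Measure (X × X)) : Prop :=
  π.map Prod.fst = μ ∧ π.map Prod.snd = ν

/-- The squared 2-Wasserstein distance. -/
def W2sq (μ ν : Measure X) : ℝ≥0∞ :=
  ⨅ (π : Measure (X × X)) (_ : IsCoupling μ ν π), ∫⁻ p, edist p.1 p.2 ^ 2 ∂π

/-- The 2-Wasserstein distance. -/
def W2 (μ ν : Measure X) : ℝ≥0∞ := W2sq μ ν ^ (1 / 2 : ℝ)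

/-- A measure has finite second moment. -/
def FiniteSecondMoment (μ : Measure X) : Prop := ∃ x₀ : X, ∫⁻ x, edist x x₀ ^ 2 ∂μ ≠ ⊤

/-- `μ ∈ P^{ac}(X, 𝔪)`: a probability in `P₂(X)` absolutely continuous w.r.t. `𝔪`. -/
def ProbAC (𝔪 μ : Measure X) : Prop :=
  IsProbabilityMeasure μ ∧ μ ≪ 𝔪 ∧ FiniteSecondMoment μ

/-- A constant-speed geodesic parametrized on `[0,1]`. -/
def IsGeod (γ : ℝ → X) : Prop :=
  ∀ s ∈ Set.Icc (0:ℝ) 1, ∀ t ∈ Set.Icc (0:ℝ) 1,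
    dist (γ s) (γ t) = |s - t| * dist (γ 0) (γ 1)

/-- The evaluation map `e_t`. -/
def et (t : ℝ) : (ℝ → X) → X := fun γ => γ t

/-- The set `M_t(A,B)` of `t`-midpoints between `A` and `B`. -/
def MidSet (t : ℝ) (A B : Set X) : Set X :=
  {z : X | ∃ γ : ℝ → X, IsGeod γ ∧ γ 0 ∈ A ∧ γ 1 ∈ B ∧ γ t = z}

/-- `η` is an optimal geodesic plan between `μ` and `ν`: a probability concentrated on
geodesics, with the correct endpoints, whose endpoint cost realises `W₂²(μ,ν)`. -/
def IsOptGeo (μ ν : Measure X) (η : Measure (ℝ → X)) : Prop :=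
  IsProbabilityMeasure η ∧ η {γ | ¬ IsGeod γ} = 0 ∧
    η.map (et 0) = μ ∧ η.map (et 1) = ν ∧
    ∫⁻ γ, edist (γ 0) (γ 1) ^ 2 ∂η = W2sq μ ν

/-- `Θ(A,B)`: the infimum of distances between `A` and `B` when `K ≥ 0`, the supremum
when `K < 0`. -/
def Theta (K : ℝ) (A B : Set X) : ℝ≥0∞ :=
  if 0 ≤ K then ⨅ x ∈ A, ⨅ y ∈ B, edist x y else ⨆ x ∈ A, ⨆ y ∈ B, edist x y

/-- The normalized restriction `𝔪_A = 𝔪|_A / 𝔪(A)`. -/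
def normRestrict (𝔪 : Measure X) (A : Set X) : Measure X := (𝔪 A)⁻¹ • 𝔪.restrict A

/-- The strong Brunn–Minkowski inequality `SBM(K,N)`. -/
def SBM (K N : ℝ) (𝔪 : Measure X) : Prop :=
  ∀ A B : Set X, MeasurableSet A → MeasurableSet B → A ⊆ mspt 𝔪 → B ⊆ mspt 𝔪 →
    0 < 𝔪 A → 𝔪 A < ⊤ → 0 < 𝔪 B → 𝔪 B < ⊤ →
    ∃ η : Measure (ℝ → X), IsOptGeo (normRestrict 𝔪 A) (normRestrict 𝔪 B) η ∧
      ∀ N' : ℝ, N ≤ N' → ∀ t ∈ Set.Icc (0:ℝ) 1,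
        tauE K N' (1 - t) (Theta K A B) * 𝔪 A ^ (1 / N') +
          tauE K N' t (Theta K A B) * 𝔪 B ^ (1 / N') ≤
        𝔪 (mspt (η.map (et t))) ^ (1 / N')

/-- The Brunn–Minkowski inequality `BM(K,N)` (the measure of the midpoint set is taken in
the sense of the outer measure associated to `𝔪`, which in Lean is the value of `𝔪` on an
arbitrary set). -/
def BM (K N : ℝ) (𝔪 : Measure X) : Prop :=
  ∀ A B : Set X, MeasurableSet A → MeasurableSet B → A.Nonempty → B.Nonempty →
    A ⊆ mspt 𝔪 → B ⊆ mspt 𝔪 →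
    ∀ N' : ℝ, N ≤ N' → ∀ t ∈ Set.Icc (0:ℝ) 1,
      tauE K N' (1 - t) (Theta K A B) * 𝔪 A ^ (1 / N') +
        tauE K N' t (Theta K A B) * 𝔪 B ^ (1 / N') ≤
      𝔪 (MidSet t A B) ^ (1 / N')

/-- A non-branching set of geodesics. -/
def NonBranchingSet (G : Set (ℝ → X)) : Prop :=
  ∀ γ₁ ∈ G, ∀ γ₂ ∈ G, ∀ t ∈ Set.Ioo (0:ℝ) 1,
    (∀ s ∈ Set.Icc (0:ℝ) t, γ₁ s = γ₂ s) → ∀ s ∈ Set.Icc (0:ℝ) 1, γ₁ s = γ₂ s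

/-- Essentially non-branching metric measure space. -/
def EssNonBranching (𝔪 : Measure X) : Prop :=
  ∀ μ₀ μ₁ : Measure X, ProbAC 𝔪 μ₀ → ProbAC 𝔪 μ₁ →
    ∀ η : Measure (ℝ → X), IsOptGeo μ₀ μ₁ η →
      ∃ G : Set (ℝ → X), NonBranchingSet G ∧ (∀ γ ∈ G, IsGeod γ) ∧ η Gᶜ = 0

/-- The (sign-reversed) right-hand side of the `CD(K,N)` inequality:
`TTl = ∫ [τ^{(1-t)}(d(x,y)) ρ₀(x)^{-1/N'} + τ^{(t)}(d(x,y)) ρ₁(y)^{-1/N'}] dπ`,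
so that `E_{N'}(μ_t) ≤ -TTl` reads `TTl ≤ ∫ ρ_t^{1-1/N'} d𝔪`. -/
def TTl (𝔪 : Measure X) (K N' t : ℝ) (π : Measure (X × X)) : ℝ≥0∞ :=
  ∫⁻ p, (tauE K N' (1 - t) (edist p.1 p.2) * ((π.map Prod.fst).rnDeriv 𝔪 p.1) ^ (-(1 / N')) +
          tauE K N' t (edist p.1 p.2) * ((π.map Prod.snd).rnDeriv 𝔪 p.2) ^ (-(1 / N'))) ∂π

/-- The `CD(K,N)` entropy-convexity inequality along some optimal geodesic plan between the
fixed marginals `μ₀, μ₁`. -/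
def CDPair (𝔪 : Measure X) (K N : ℝ) (μ₀ μ₁ : Measure X) : Prop :=
  ∃ η : Measure (ℝ → X), IsOptGeo μ₀ μ₁ η ∧
    (∀ t ∈ Set.Icc (0:ℝ) 1, η.map (et t) ≪ 𝔪) ∧
    ∀ N' : ℝ, N ≤ N' → ∀ t ∈ Set.Icc (0:ℝ) 1,
      TTl 𝔪 K N' t (η.map (fun γ => (γ 0, γ 1))) ≤
        ∫⁻ x, ((η.map (et t)).rnDeriv 𝔪 x) ^ (1 - 1 / N') ∂𝔪

/-- The curvature-dimension condition `CD(K,N)` of Lott–Sturm–Villani. -/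
def CD (K N : ℝ) (𝔪 : Measure X) : Prop :=
  ∀ μ₀ μ₁ : Measure X, ProbAC 𝔪 μ₀ → ProbAC 𝔪 μ₁ → CDPair 𝔪 K N μ₀ μ₁

/-- The `N`-Rényi entropy `E_N(μ) = -∫ ρ^{1-1/N} d𝔪`, where `ρ` is the density of the
absolutely continuous part of `μ` w.r.t. `𝔪`. -/
def Ent (𝔪 : Measure X) (N : ℝ) (μ : Measure X) : ℝ :=
  - ∫ x, (μ.rnDeriv 𝔪 x).toReal ^ (1 - 1 / N) ∂𝔪

/-- A step measure: a finite combination of normalized restrictions of `𝔪` to disjoint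
Borel sets of positive finite measure. -/
def IsStepMeasure (𝔪 μ : Measure X) : Prop :=
  ∃ (n : ℕ) (A : Fin n → Set X) (lam : Fin n → ℝ≥0∞),
    (∀ i, MeasurableSet (A i)) ∧ Pairwise (Function.onFun Disjoint A) ∧
    (∀ i, 0 < 𝔪 (A i) ∧ 𝔪 (A i) < ⊤) ∧
    μ = ∑ i, lam i • normRestrict 𝔪 (A i)

/-- A bounded probability measure: absolutely continuous, with bounded support and density
bounded above and below away from zero on it. -/
def IsBoundedProb (𝔪 μ : Measure X) : Prop :=
  ProbAC 𝔪 μ ∧ ∃ (S : Set X) (c C : ℝ), IsBounded S ∧ 0 < c ∧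
    μ Sᶜ = 0 ∧ ∀ᵐ x ∂𝔪.restrict S,
      c ≤ (μ.rnDeriv 𝔪 x).toReal ∧ (μ.rnDeriv 𝔪 x).toReal ≤ C

/-- `𝔪` is qualitatively non-degenerate. -/
def QND (𝔪 : Measure X) : Prop :=
  ∀ R > (0:ℝ), ∀ xb : X, ∃ f : ℝ → ℝ,
    (∀ t ∈ Set.Ioo (0:ℝ) 1, 0 < f t) ∧
    (1/2 : ℝ) < Filter.limsup f (nhdsWithin 0 (Set.Ioi 0)) ∧
    ∀ t ∈ Set.Ioo (0:ℝ) 1, ∀ x ∈ Metric.ball xb R, ∀ A : Set X,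
      MeasurableSet A → A ⊆ Metric.ball xb R →
      ENNReal.ofReal (f t) * 𝔪 A ≤ 𝔪 (MidSet t A {x})

/-- The measure contraction property `MCP(K,N)`. -/
def MCP (K N : ℝ) (𝔪 : Measure X) : Prop :=
  ∀ x ∈ mspt 𝔪, ∀ A : Set X, MeasurableSet A → 0 < 𝔪 A → 𝔪 A < ⊤ →
    ∃ η : Measure (ℝ → X), IsOptGeo (Measure.dirac x) (normRestrict 𝔪 A) η ∧
      ∀ t ∈ Set.Icc (0:ℝ) 1, ∀ S : Set X, MeasurableSet S →
        ∫⁻ γ in (et t) ⁻¹' S, tauE K N t (edist (γ 0) (γ 1)) ^ (N : ℝ) ∂η ≤ (𝔪 A)⁻¹ * 𝔪 S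


-- t * sin x ≤ sin (t x) on [0,π], via concavity
lemma aux_sin_mul (t : ℝ) (ht : t ∈ Set.Icc (0:ℝ) 1) {x : ℝ} (hx0 : 0 ≤ x) (hxpi : x ≤ Real.pi) :
    t * Real.sin x ≤ Real.sin (t * x) := by
  rcases eq_or_lt_of_le ht.1 with h | h
  · simp [← h]
  rcases eq_or_lt_of_le ht.2 with h1 | h1
  · simp [h1]
  have := strictConcaveOn_sin_Icc.concaveOn.2 (x := x) (y := 0)
    ⟨hx0, hxpi⟩ ⟨le_rfl, Real.pi_pos.le⟩ h.le (by linarith : (0:ℝ) ≤ 1 - t) (by ring)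
  simpa using this

-- sinh(t x) ≤ t sinh x for x ≥ 0, t ∈ [0,1]
lemma aux_sinh_mul (t : ℝ) (ht : t ∈ Set.Icc (0:ℝ) 1) {x : ℝ} (hx0 : 0 ≤ x) :
    Real.sinh (t * x) ≤ t * Real.sinh x := by
  have key : MonotoneOn (fun x => t * Real.sinh x - Real.sinh (t * x)) (Set.Ici 0) := by
    apply monotoneOn_of_deriv_nonneg (convex_Ici 0)
    · fun_prop
    · intro x hx
      exact (((Real.hasDerivAt_sinh x).const_mul t).sub
        (((Real.hasDerivAt_sinh (t*x)).comp x ((hasDerivAt_id x).const_mul t)))).differentiableAt.differentiableWithinAt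
    · intro x hx
      rw [interior_Ici] at hx
      have hd : HasDerivAt (fun x => t * Real.sinh x - Real.sinh (t * x))
          (t * Real.cosh x - Real.cosh (t*x) * (t * 1)) x :=
        ((Real.hasDerivAt_sinh x).const_mul t).sub
          ((Real.hasDerivAt_sinh (t*x)).comp x ((hasDerivAt_id x).const_mul t))
      rw [hd.deriv]
      have : Real.cosh (t*x) ≤ Real.cosh x := by
        rw [Real.cosh_le_cosh]
        rw [abs_of_nonneg (mul_nonneg ht.1 hx.le), abs_of_nonneg hx.le]
        · nlinarith [ht.2, (show (0:ℝ) < x from hx).le]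
      nlinarith [ht.1]
  have := key (self_mem_Ici) (mem_Ici.2 hx0) hx0
  simpa using this


lemma aux_dsin (t x : ℝ) : HasDerivAt (fun y => Real.sin (t*y)) (t * Real.cos (t*x)) x := by
  simpa [mul_comm, Function.comp_def] using (Real.hasDerivAt_sin (t*x)).comp x ((hasDerivAt_id x).const_mul t)

lemma aux_dcos (t x : ℝ) : HasDerivAt (fun y => Real.cos (t*y)) (-(t * Real.sin (t*x))) x := by
  simpa [mul_comm, Function.comp_def] using (Real.hasDerivAt_cos (t*x)).comp x ((hasDerivAt_id x).const_mul t)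

lemma aux_dsinh (t x : ℝ) : HasDerivAt (fun y => Real.sinh (t*y)) (t * Real.cosh (t*x)) x := by
  simpa [mul_comm, Function.comp_def] using (Real.hasDerivAt_sinh (t*x)).comp x ((hasDerivAt_id x).const_mul t)

lemma aux_dcosh (t x : ℝ) : HasDerivAt (fun y => Real.cosh (t*y)) (t * Real.sinh (t*x)) x := by
  simpa [mul_comm, Function.comp_def] using (Real.hasDerivAt_cosh (t*x)).comp x ((hasDerivAt_id x).const_mul t)

lemma aux_dsinnum (t x : ℝ) :
    HasDerivAt (fun y => t * Real.cos (t*y) * Real.sin y - Real.sin (t*y) * Real.cos y)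
      ((1 - t^2) * Real.sin (t*x) * Real.sin x) x := by
  have h := (((aux_dcos t x).const_mul t).mul (Real.hasDerivAt_sin x)).sub
    ((aux_dsin t x).mul (Real.hasDerivAt_cos x))
  exact h.congr_deriv (by ring)

lemma aux_dsinhnum (t x : ℝ) :
    HasDerivAt (fun y => t * Real.cosh (t*y) * Real.sinh y - Real.sinh (t*y) * Real.cosh y)
      ((t^2 - 1) * Real.sinh (t*x) * Real.sinh x) x := by
  have h := (((aux_dcosh t x).const_mul t).mul (Real.hasDerivAt_sinh x)).sub
    ((aux_dsinh t x).mul (Real.hasDerivAt_cosh x))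
  exact h.congr_deriv (by ring)

lemma aux_sin_num (t : ℝ) (ht : t ∈ Set.Icc (0:ℝ) 1) {x : ℝ} (hx0 : 0 ≤ x) (hxpi : x ≤ Real.pi) :
    0 ≤ t * Real.cos (t * x) * Real.sin x - Real.sin (t * x) * Real.cos x := by
  have key : MonotoneOn (fun x => t * Real.cos (t*x) * Real.sin x - Real.sin (t*x) * Real.cos x)
      (Set.Icc 0 Real.pi) := by
    apply monotoneOn_of_deriv_nonneg (convex_Icc 0 Real.pi)
    · fun_prop
    · intro x _
      exact (aux_dsinnum t x).differentiableAt.differentiableWithinAt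
    · intro x hx
      rw [interior_Icc] at hx
      rw [(aux_dsinnum t x).deriv]
      have h1 : 0 ≤ Real.sin (t*x) := Real.sin_nonneg_of_nonneg_of_le_pi
        (mul_nonneg ht.1 hx.1.le) (by nlinarith [ht.2, hx.2.le, hx.1.le])
      have h2 : 0 ≤ Real.sin x := Real.sin_nonneg_of_nonneg_of_le_pi hx.1.le hx.2.le
      have h3 : 0 ≤ 1 - t^2 := by nlinarith [ht.1, ht.2]
      positivity
  have := key (Set.left_mem_Icc.2 Real.pi_pos.le) ⟨hx0, hxpi⟩ hx0
  simpa using this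

lemma aux_sinh_num (t : ℝ) (ht : t ∈ Set.Icc (0:ℝ) 1) {x : ℝ} (hx0 : 0 ≤ x) :
    t * Real.cosh (t * x) * Real.sinh x - Real.sinh (t * x) * Real.cosh x ≤ 0 := by
  have key : AntitoneOn (fun x => t * Real.cosh (t*x) * Real.sinh x - Real.sinh (t*x) * Real.cosh x)
      (Set.Ici 0) := by
    apply antitoneOn_of_deriv_nonpos (convex_Ici 0)
    · fun_prop
    · intro x _
      exact (aux_dsinhnum t x).differentiableAt.differentiableWithinAt
    · intro x hx
      rw [interior_Ici] at hx
      rw [(aux_dsinhnum t x).deriv]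
      have h1 : 0 ≤ Real.sinh (t*x) := Real.sinh_nonneg_iff.2 (mul_nonneg ht.1 hx.le)
      have h2 : 0 ≤ Real.sinh x := Real.sinh_nonneg_iff.2 hx.le
      have h3 : t^2 - 1 ≤ 0 := by nlinarith [ht.1, ht.2]
      nlinarith [mul_nonneg h1 h2]
  have := key Set.self_mem_Ici (Set.mem_Ici.2 hx0) hx0
  simpa using this

lemma aux_sin_ratio (t : ℝ) (ht : t ∈ Set.Icc (0:ℝ) 1) :
    MonotoneOn (fun x => Real.sin (t*x) / Real.sin x) (Set.Ioo 0 Real.pi) := by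
  have hne : ∀ x ∈ Set.Ioo (0:ℝ) Real.pi, Real.sin x ≠ 0 := fun x hx =>
    (Real.sin_pos_of_pos_of_lt_pi hx.1 hx.2).ne'
  have hder : ∀ x ∈ Set.Ioo (0:ℝ) Real.pi, HasDerivAt (fun y => Real.sin (t*y) / Real.sin y)
      ((t * Real.cos (t*x) * Real.sin x - Real.sin (t*x) * Real.cos x) / Real.sin x ^ 2) x :=
    fun x hx => (aux_dsin t x).div (Real.hasDerivAt_sin x) (hne x hx)
  apply monotoneOn_of_deriv_nonneg (convex_Ioo 0 Real.pi)
  · exact ContinuousOn.div (by fun_prop) (by fun_prop) hne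
  · intro x hx
    rw [interior_Ioo] at hx
    exact (hder x hx).differentiableAt.differentiableWithinAt
  · intro x hx
    rw [interior_Ioo] at hx
    rw [(hder x hx).deriv]
    exact div_nonneg (aux_sin_num t ht hx.1.le hx.2.le) (sq_nonneg _)

lemma aux_sinh_ratio (t : ℝ) (ht : t ∈ Set.Icc (0:ℝ) 1) :
    AntitoneOn (fun x => Real.sinh (t*x) / Real.sinh x) (Set.Ioi 0) := by
  have hne : ∀ x ∈ Set.Ioi (0:ℝ), Real.sinh x ≠ 0 := fun x hx =>
    (Real.sinh_pos_iff.2 hx).ne'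
  have hder : ∀ x ∈ Set.Ioi (0:ℝ), HasDerivAt (fun y => Real.sinh (t*y) / Real.sinh y)
      ((t * Real.cosh (t*x) * Real.sinh x - Real.sinh (t*x) * Real.cosh x) / Real.sinh x ^ 2) x :=
    fun x hx => (aux_dsinh t x).div (Real.hasDerivAt_sinh x) (hne x hx)
  apply antitoneOn_of_deriv_nonpos (convex_Ioi 0)
  · exact ContinuousOn.div (by fun_prop) (by fun_prop) hne
  · intro x hx
    rw [interior_Ioi] at hx
    exact (hder x hx).differentiableAt.differentiableWithinAt
  · intro x hx
    rw [interior_Ioi] at hx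
    rw [(hder x hx).deriv]
    exact div_nonpos_of_nonpos_of_nonneg (aux_sinh_num t ht hx.le) (sq_nonneg _)

lemma sigmaC_zero (K N t : ℝ) : sigmaC K N t 0 = ENNReal.ofReal t := by
  simp [sigmaC]

lemma sigmaC_eq_top {K N t θ : ℝ} (hK : K ≠ 0) (hθ : θ ≠ 0)
    (h : N * Real.pi ^ 2 ≤ K * θ ^ 2) : sigmaC K N t θ = ⊤ := by
  simp only [sigmaC]
  rw [if_neg (not_or.mpr ⟨hK, hθ⟩), if_pos h]

lemma sigmaC_pos_eq {K N t θ : ℝ} (hK : 0 < K) (hθ : θ ≠ 0)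
    (h : ¬ N * Real.pi ^ 2 ≤ K * θ ^ 2) :
    sigmaC K N t θ =
      ENNReal.ofReal (Real.sin (t * θ * Real.sqrt (K / N)) / Real.sin (θ * Real.sqrt (K / N))) := by
  simp only [sigmaC]
  rw [if_neg (not_or.mpr ⟨hK.ne', hθ⟩), if_neg h, if_pos hK]

lemma sigmaC_neg_eq {K N t θ : ℝ} (hK : K < 0) (hθ : θ ≠ 0)
    (h : ¬ N * Real.pi ^ 2 ≤ K * θ ^ 2) :
    sigmaC K N t θ =
      ENNReal.ofReal (Real.sinh (t * θ * Real.sqrt (-K / N)) / Real.sinh (θ * Real.sqrt (-K / N))) := by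
  simp only [sigmaC]
  rw [if_neg (not_or.mpr ⟨hK.ne, hθ⟩), if_neg h, if_neg (not_lt.2 hK.le)]

lemma aux_sigma_mono (K N t : ℝ) (hN : 0 < N) (ht : t ∈ Set.Ioo (0:ℝ) 1) (hK : 0 ≤ K) :
    MonotoneOn (fun θ : ℝ => sigmaC K N t θ) (Set.Ici (0:ℝ)) := by
  intro x hx y hy hxy
  simp only
  rcases hK.eq_or_lt with hK0 | hK0
  · simp [sigmaC, ← hK0]
  have ha : 0 < Real.sqrt (K / N) := Real.sqrt_pos.2 (by positivity)
  set a := Real.sqrt (K / N) with ha'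
  have ha2 : a ^ 2 = K / N := Real.sq_sqrt (by positivity)
  have hcond : ∀ θ : ℝ, (N * Real.pi ^ 2 ≤ K * θ ^ 2 ↔ Real.pi ^ 2 ≤ (θ * a) ^ 2) := by
    intro θ
    have e : N * (θ * a) ^ 2 = K * θ ^ 2 := by
      rw [mul_pow, ha2]; field_simp
    rw [← e, mul_le_mul_iff_right₀ hN]
  have hxa : (0:ℝ) ≤ x := hx
  have hya : (0:ℝ) ≤ y := hy
  rcases hxa.eq_or_lt with hx0 | hx0
  · -- x = 0
    rw [← hx0, sigmaC_zero]
    rcases hya.eq_or_lt with hy0 | hy0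
    · rw [← hy0, sigmaC_zero]
    · by_cases hc : N * Real.pi ^ 2 ≤ K * y ^ 2
      · rw [sigmaC_eq_top hK0.ne' hy0.ne' hc]; exact le_top
      · rw [sigmaC_pos_eq hK0 hy0.ne' hc]
        have hupi : y * a < Real.pi := by
          have h2 := (hcond y).not.1 hc
          push_neg at h2
          nlinarith [mul_nonneg hya ha.le, Real.pi_pos]
        have hu : 0 < y * a := mul_pos hy0 ha
        apply ENNReal.ofReal_le_ofReal
        rw [le_div_iff₀ (Real.sin_pos_of_pos_of_lt_pi hu hupi), mul_assoc]
        exact aux_sin_mul t ⟨ht.1.le, ht.2.le⟩ hu.le hupi.le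
  · -- x > 0
    have hy0 : 0 < y := lt_of_lt_of_le hx0 hxy
    by_cases hcx : N * Real.pi ^ 2 ≤ K * x ^ 2
    · have hcy : N * Real.pi ^ 2 ≤ K * y ^ 2 :=
        le_trans hcx (mul_le_mul_of_nonneg_left (pow_le_pow_left₀ hxa hxy 2) hK0.le)
      rw [sigmaC_eq_top hK0.ne' hx0.ne' hcx, sigmaC_eq_top hK0.ne' hy0.ne' hcy]
    · rw [sigmaC_pos_eq hK0 hx0.ne' hcx]
      by_cases hcy : N * Real.pi ^ 2 ≤ K * y ^ 2
      · rw [sigmaC_eq_top hK0.ne' hy0.ne' hcy]; exact le_top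
      · rw [sigmaC_pos_eq hK0 hy0.ne' hcy]
        have hxpi : x * a < Real.pi := by
          have h2 := (hcond x).not.1 hcx
          push_neg at h2
          nlinarith [mul_nonneg hxa ha.le, Real.pi_pos]
        have hypi : y * a < Real.pi := by
          have h2 := (hcond y).not.1 hcy
          push_neg at h2
          nlinarith [mul_nonneg hya ha.le, Real.pi_pos]
        apply ENNReal.ofReal_le_ofReal
        have := aux_sin_ratio t ⟨ht.1.le, ht.2.le⟩
          (Set.mem_Ioo.2 ⟨mul_pos hx0 ha, hxpi⟩) (Set.mem_Ioo.2 ⟨mul_pos hy0 ha, hypi⟩)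
          (mul_le_mul_of_nonneg_right hxy ha.le)
        simpa [mul_assoc] using this

lemma aux_sigma_anti (K N t : ℝ) (hN : 0 < N) (ht : t ∈ Set.Ioo (0:ℝ) 1) (hK : K < 0) :
    AntitoneOn (fun θ : ℝ => sigmaC K N t θ) (Set.Ici (0:ℝ)) := by
  intro x hx y hy hxy
  simp only
  have hb : 0 < Real.sqrt (-K / N) := Real.sqrt_pos.2 (div_pos (by linarith) hN)
  set b := Real.sqrt (-K / N) with hb'
  have hxa : (0:ℝ) ≤ x := hx
  have hya : (0:ℝ) ≤ y := hy
  have hcond : ∀ θ : ℝ, ¬ (N * Real.pi ^ 2 ≤ K * θ ^ 2) := by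
    intro θ h
    have h1 : K * θ ^ 2 ≤ 0 := mul_nonpos_of_nonpos_of_nonneg hK.le (sq_nonneg θ)
    have h2 : 0 < N * Real.pi ^ 2 := mul_pos hN (pow_pos Real.pi_pos 2)
    linarith
  rcases hxa.eq_or_lt with hx0 | hx0
  · rw [← hx0, sigmaC_zero]
    rcases hya.eq_or_lt with hy0 | hy0
    · rw [← hy0, sigmaC_zero]
    · rw [sigmaC_neg_eq hK hy0.ne' (hcond y)]
      apply ENNReal.ofReal_le_ofReal
      have hu : 0 < y * b := mul_pos hy0 hb
      rw [div_le_iff₀ (Real.sinh_pos_iff.2 hu), mul_assoc]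
      exact aux_sinh_mul t ⟨ht.1.le, ht.2.le⟩ hu.le
  · have hy0 : 0 < y := lt_of_lt_of_le hx0 hxy
    rw [sigmaC_neg_eq hK hx0.ne' (hcond x), sigmaC_neg_eq hK hy0.ne' (hcond y)]
    apply ENNReal.ofReal_le_ofReal
    have := aux_sinh_ratio t ⟨ht.1.le, ht.2.le⟩
      (Set.mem_Ioi.2 (mul_pos hx0 hb)) (Set.mem_Ioi.2 (mul_pos hy0 hb))
      (mul_le_mul_of_nonneg_right hxy hb.le)
    simpa [mul_assoc] using this

/-- for fixed `t ∈ (0,1)`, `K ∈ ℝ`, `N > 1`, the map `θ ↦ τ_{K,N}^{(t)}(θ)`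
is nondecreasing on `[0,∞)` if `K ≥ 0` and nonincreasing if `K < 0`. -/
theorem stmt0 (K N t : ℝ) (hN : 1 < N) (ht : t ∈ Set.Ioo (0:ℝ) 1) :
    (0 ≤ K → MonotoneOn (fun θ : ℝ => tauC K N t θ) (Set.Ici (0:ℝ))) ∧
    (K < 0 → AntitoneOn (fun θ : ℝ => tauC K N t θ) (Set.Ici (0:ℝ))) := by
  have hN0 : (0:ℝ) < N - 1 := by linarith
  have hexp : (0:ℝ) ≤ 1 - 1 / N := by
    have : 1 / N < 1 := by rw [div_lt_one (by linarith : (0:ℝ) < N)]; exact hN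
    linarith
  constructor
  · intro hK x hx y hy hxy
    exact mul_le_mul_right
      (ENNReal.rpow_le_rpow (aux_sigma_mono K (N-1) t hN0 ht hK hx hy hxy) hexp) _
  · intro hK x hx y hy hxy
    exact mul_le_mul_right
      (ENNReal.rpow_le_rpow (aux_sigma_anti K (N-1) t hN0 ht hK hx hy hxy) hexp) _


end
end

section
/- Let (X,d) be a proper metric space, A ⊂ X compact and x ∈ X. Then the intersection over all r > 0 of the midpoint sets M_t(A, B_r(x)) equals M_t(A, x), i.e. ⋂_{r>0} M_t(A, B_r(x)) = M_t(A, {x}) for every t ∈ [0,1]. -/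
open MeasureTheory Metric Set Filter Bornology
open scoped ENNReal NNReal

noncomputable section

variable {X : Type*} [MetricSpace X] [MeasurableSpace X] [BorelSpace X]

/-- in a proper metric space, for `A` compact,
`⋂_{r>0} M_t(A, B_r(x)) = M_t(A, {x})` for every `t ∈ [0,1]`. -/
theorem stmt9 [ProperSpace X] (A : Set X) (hA : IsCompact A) (x : X) (t : ℝ)
    (ht : t ∈ Set.Icc (0:ℝ) 1) :
    ⋂ (r : ℝ) (_ : 0 < r), MidSet t A (Metric.ball x r) = MidSet t A ({x} : Set X) := by
  apply Set.Subset.antisymm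
  · intro z hz
    have hch : ∀ n : ℕ, ∃ γ : ℝ → X, IsGeod γ ∧ γ 0 ∈ A ∧
        γ 1 ∈ Metric.ball x (1 / (n + 1)) ∧ γ t = z := by
      intro n
      have h1 := Set.mem_iInter.mp hz (1 / (n + 1))
      exact Set.mem_iInter.mp h1 (by positivity)
    choose g hg hg0 hg1 hgt using hch
    obtain ⟨R₀, hR₀⟩ := hA.isBounded.subset_closedBall x
    set c : ℝ → ℝ := fun s => max 0 (min 1 s) with hc
    have hcmem : ∀ s, c s ∈ Set.Icc (0:ℝ) 1 := by
      intro s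
      constructor
      · exact le_max_left _ _
      · simp only [hc, max_le_iff]
        exact ⟨zero_le_one, min_le_left _ _⟩
    have hceq : ∀ s ∈ Set.Icc (0:ℝ) 1, c s = s := by
      intro s hs
      simp only [hc]
      rw [min_eq_right hs.2, max_eq_right hs.1]
    set f : ℕ → ℝ → X := fun n s => g n (c s) with hf
    set K : Set X := Metric.closedBall x (R₀ + 2) with hK
    have hb : ∀ n s, f n s ∈ K := by
      intro n s
      have hu := hcmem s
      have h0 : dist (g n 0) x ≤ R₀ := by
        simpa [Metric.mem_closedBall] using hR₀ (hg0 n)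
      have h1 : dist (g n 1) x < 1 := by
        have := Metric.mem_ball.mp (hg1 n)
        have hle : (1 : ℝ) / (n + 1) ≤ 1 := by
          rw [div_le_one (by positivity)]
          linarith [Nat.cast_nonneg (α := ℝ) n]
        linarith
      have hd01 : dist (g n 0) (g n 1) ≤ R₀ + 1 := by
        have := dist_triangle (g n 0) x (g n 1)
        have := dist_comm (g n 1) x
        calc dist (g n 0) (g n 1) ≤ dist (g n 0) x + dist x (g n 1) :=
              dist_triangle _ _ _
          _ ≤ R₀ + 1 := by rw [dist_comm x (g n 1)]; linarith
      have hdist : dist (g n (c s)) (g n 1) = |c s - 1| * dist (g n 0) (g n 1) :=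
        hg n (c s) hu 1 (by norm_num)
      have habs : |c s - 1| ≤ 1 := by
        rw [abs_le]; exact ⟨by linarith [hu.1], by linarith [hu.2]⟩
      have hdn : (0:ℝ) ≤ dist (g n 0) (g n 1) := dist_nonneg
      have : dist (g n (c s)) x ≤ R₀ + 2 := by
        calc dist (g n (c s)) x ≤ dist (g n (c s)) (g n 1) + dist (g n 1) x :=
              dist_triangle _ _ _
          _ ≤ 1 * dist (g n 0) (g n 1) + 1 := by
              rw [hdist]
              have := mul_le_mul_of_nonneg_right habs hdn
              linarith
          _ ≤ R₀ + 2 := by linarith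
      simpa [hK, hf, Metric.mem_closedBall] using this
    have hKc : IsCompact K := isCompact_closedBall x _
    have hS : IsCompact (Set.pi Set.univ (fun _ : ℝ => K)) :=
      isCompact_univ_pi (fun _ => hKc)
    set U : Ultrafilter ℕ := Ultrafilter.of Filter.atTop with hUdef
    have hU : (U : Filter ℕ) ≤ Filter.atTop := Ultrafilter.of_le _
    have hmem : Set.pi Set.univ (fun _ : ℝ => K) ∈ U.map f := by
      rw [Ultrafilter.mem_map]
      have : f ⁻¹' Set.pi Set.univ (fun _ : ℝ => K) = Set.univ := by
        ext n
        simp only [Set.mem_preimage, Set.mem_univ_pi, Set.mem_univ, iff_true]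
        exact fun s => hb n s
      rw [this]
      exact Filter.univ_mem
    obtain ⟨γ, hγS, hγlim⟩ := hS.ultrafilter_le_nhds (U.map f)
      (Filter.le_principal_iff.mpr hmem)
    have htend : Filter.Tendsto f (U : Filter ℕ) (nhds γ) := by
      rw [Filter.Tendsto, ← Ultrafilter.coe_map]
      exact hγlim
    have hpt : ∀ s, Filter.Tendsto (fun n => f n s) (U : Filter ℕ) (nhds (γ s)) :=
      tendsto_pi_nhds.mp htend
    have hγt : γ t = z := by
      refine tendsto_nhds_unique (hpt t) ?_
      have : (fun n => f n t) = fun _ => z := by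
        funext n
        simp only [hf, hceq t ht, hgt n]
      rw [this]
      exact tendsto_const_nhds
    have hγ1 : γ 1 = x := by
      refine tendsto_nhds_unique (hpt 1) ?_
      have h1 : Filter.Tendsto (fun n => f n 1) Filter.atTop (nhds x) := by
        rw [tendsto_iff_dist_tendsto_zero]
        refine squeeze_zero (fun n => dist_nonneg) (fun n => ?_)
          tendsto_one_div_add_atTop_nhds_zero_nat
        have : f n 1 = g n 1 := by
          simp only [hf, hceq 1 (by norm_num : (1:ℝ) ∈ Set.Icc (0:ℝ) 1)]
        rw [this]
        exact le_of_lt (Metric.mem_ball.mp (hg1 n))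
      exact h1.mono_left hU
    have hγ0 : γ 0 ∈ A := by
      refine hA.isClosed.mem_of_tendsto (hpt 0) ?_
      filter_upwards with n
      have : f n 0 = g n 0 := by
        simp only [hf, hceq 0 (by norm_num : (0:ℝ) ∈ Set.Icc (0:ℝ) 1)]
      rw [this]
      exact hg0 n
    refine ⟨γ, ?_, hγ0, by simp [hγ1], hγt⟩
    intro s hs u hu
    have h1 : Filter.Tendsto (fun n => dist (f n s) (f n u)) (U : Filter ℕ)
        (nhds (dist (γ s) (γ u))) := (hpt s).dist (hpt u)
    have h3 : Filter.Tendsto (fun n => |s - u| * dist (f n 0) (f n 1)) (U : Filter ℕ)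
        (nhds (|s - u| * dist (γ 0) (γ 1))) :=
      ((hpt 0).dist (hpt 1)).const_mul _
    have h2 : (fun n => dist (f n s) (f n u)) =
        fun n => |s - u| * dist (f n 0) (f n 1) := by
      funext n
      simp only [hf, hceq s hs, hceq u hu,
        hceq 0 (by norm_num : (0:ℝ) ∈ Set.Icc (0:ℝ) 1),
        hceq 1 (by norm_num : (1:ℝ) ∈ Set.Icc (0:ℝ) 1)]
      exact hg n s hs u hu
    exact tendsto_nhds_unique h1 (h2 ▸ h3)
  · intro z hz
    obtain ⟨γ, h1, h2, h3, h4⟩ := hz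
    refine Set.mem_iInter.mpr fun r => Set.mem_iInter.mpr fun hr => ?_
    exact ⟨γ, h1, h2, by
      simp only [Set.mem_singleton_iff] at h3
      rw [h3]
      exact Metric.mem_ball_self hr, h4⟩

end
end

section
/- Let (X,d,𝔪) be a metric measure space supporting BM(K,N). Then 𝔪 is qualitatively non-degenerate on spt(𝔪): for every R > 0 and x̄ ∈ spt(𝔪) there is a function f(t) = inf over relevant configurations of τ_{K,N}^{(1−t)}(·)^N with limsup_{t→0} f(t) > 1/2, such that 𝔪̄(M_t(A, x)) ≥ f(t) · 𝔪(A) for every x ∈ B_R(x̄) ∩ spt(𝔪) and every Borel A ⊂ B_R(x̄) ∩ spt(𝔪). -/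
open MeasureTheory Metric Set Filter Bornology
open scoped ENNReal NNReal

noncomputable section

variable {X : Type*} [MetricSpace X] [MeasurableSpace X] [BorelSpace X]

section AuxLemmas

lemma sinh_sub_le_aux {b a : ℝ} (hb : 0 ≤ b) (hba : b ≤ a) :
    Real.sinh a - Real.sinh b ≤ (a - b) * Real.cosh a := by
  rcases eq_or_lt_of_le hba with rfl | hba'
  · simp
  · obtain ⟨c, hc, hc'⟩ := exists_hasDerivAt_eq_slope Real.sinh Real.cosh hba'
      Real.continuous_sinh.continuousOn (fun x _ => Real.hasDerivAt_sinh x)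
    have hca : Real.cosh c ≤ Real.cosh a :=
      Real.cosh_le_cosh.2 (by
        rw [abs_of_nonneg (hb.trans hc.1.le), abs_of_nonneg (hb.trans hba)]
        exact hc.2.le)
    have hab : (0:ℝ) < a - b := by linarith
    have h1 : Real.sinh a - Real.sinh b = (a - b) * Real.cosh c := by
      field_simp at hc'
      linarith
    rw [h1]
    exact mul_le_mul_of_nonneg_left hca hab.le

lemma sigma_lb {K N' s θ D : ℝ} (hN' : 0 < N') (hs0 : 0 < s) (hs1 : s ≤ 1)
    (hθ : 0 ≤ θ) (hθD : K < 0 → θ * Real.sqrt (-K / N') ≤ D) :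
    ENNReal.ofReal (max (min s (1 - (1 - s) * Real.cosh D)) (s / Real.cosh D)) ≤
      sigmaC K N' s θ := by
  have hM : (1:ℝ) ≤ Real.cosh D := Real.one_le_cosh D
  have hM0 : (0:ℝ) < Real.cosh D := lt_of_lt_of_le one_pos hM
  have hmax_le : max (min s (1 - (1 - s) * Real.cosh D)) (s / Real.cosh D) ≤ s :=
    max_le (min_le_left _ _) (div_le_self hs0.le hM)
  rw [sigmaC]
  by_cases h0 : K = 0 ∨ θ = 0
  · rw [if_pos h0]; exact ENNReal.ofReal_le_ofReal hmax_le
  rw [if_neg h0]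
  push_neg at h0
  obtain ⟨hK0, hθ0⟩ := h0
  have hθpos : 0 < θ := hθ.lt_of_ne (Ne.symm hθ0)
  by_cases hbig : N' * Real.pi ^ 2 ≤ K * θ ^ 2
  · rw [if_pos hbig]; exact le_top
  rw [if_neg hbig]
  by_cases hKpos : 0 < K
  · rw [if_pos hKpos]
    have hsq : 0 < Real.sqrt (K / N') := Real.sqrt_pos.2 (div_pos hKpos hN')
    set a := θ * Real.sqrt (K / N') with ha_def
    have ha0 : 0 < a := mul_pos hθpos hsq
    have ha2 : a ^ 2 * N' = K * θ ^ 2 := by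
      rw [ha_def, mul_pow, Real.sq_sqrt (div_pos hKpos hN').le]
      field_simp
    have ha2' : a ^ 2 < Real.pi ^ 2 := by nlinarith [not_le.1 hbig, ha2, hN']
    have haπ : a < Real.pi := by nlinarith [ha2', Real.pi_pos, ha0]
    have hsina : 0 < Real.sin a := Real.sin_pos_of_pos_of_lt_pi ha0 haπ
    have hconc : s * Real.sin a ≤ Real.sin (s * a) := by
      have := strictConcaveOn_sin_Icc.concaveOn.2
        (Set.mem_Icc.2 ⟨le_rfl, Real.pi_pos.le⟩)
        (Set.mem_Icc.2 ⟨ha0.le, haπ.le⟩)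
        (by linarith : (0:ℝ) ≤ 1 - s) hs0.le (by ring)
      simpa using this
    apply ENNReal.ofReal_le_ofReal
    rw [mul_assoc, le_div_iff₀ hsina, ← ha_def]
    calc max (min s (1 - (1 - s) * Real.cosh D)) (s / Real.cosh D) * Real.sin a
        ≤ s * Real.sin a := mul_le_mul_of_nonneg_right hmax_le hsina.le
      _ ≤ Real.sin (s * a) := hconc
  · rw [if_neg hKpos]
    have hKneg : K < 0 := lt_of_le_of_ne (not_lt.1 hKpos) hK0
    have hsq : 0 < Real.sqrt (-K / N') := Real.sqrt_pos.2 (div_pos (neg_pos.2 hKneg) hN')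
    set a := θ * Real.sqrt (-K / N') with ha_def
    have ha0 : 0 < a := mul_pos hθpos hsq
    have haD : a ≤ D := hθD hKneg
    have hD0 : 0 < D := lt_of_lt_of_le ha0 haD
    have hsinha : 0 < Real.sinh a := Real.sinh_pos_iff.2 ha0
    have hcosha : Real.cosh a ≤ Real.cosh D :=
      Real.cosh_le_cosh.2 (by rw [abs_of_nonneg ha0.le, abs_of_nonneg hD0.le]; exact haD)
    have hsa : s * a < Real.sinh (s * a) := Real.self_lt_sinh_iff.2 (mul_pos hs0 ha0)
    have hself : a < Real.sinh a := Real.self_lt_sinh_iff.2 ha0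
    have hsinh_cosh : Real.sinh a ≤ a * Real.cosh a := by
      simpa using sinh_sub_le_aux le_rfl ha0.le
    have htangent : Real.sinh a - Real.sinh (s * a) ≤ (a - s * a) * Real.cosh a :=
      sinh_sub_le_aux (mul_nonneg hs0.le ha0.le) (by nlinarith)
    apply ENNReal.ofReal_le_ofReal
    rw [mul_assoc, le_div_iff₀ hsinha, ← ha_def, max_mul_of_nonneg _ _ hsinha.le]
    apply max_le
    · have h2 : a * Real.cosh a ≤ Real.sinh a * Real.cosh D :=
        mul_le_mul hself.le hcosha (Real.cosh_pos (x := a)).le hsinha.le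
      have h3 : (1 - s) * (a * Real.cosh a) ≤ (1 - s) * (Real.sinh a * Real.cosh D) :=
        mul_le_mul_of_nonneg_left h2 (by linarith)
      calc min s (1 - (1 - s) * Real.cosh D) * Real.sinh a
          ≤ (1 - (1 - s) * Real.cosh D) * Real.sinh a :=
            mul_le_mul_of_nonneg_right (min_le_right _ _) hsinha.le
        _ ≤ Real.sinh (s * a) := by nlinarith
    · rw [div_mul_eq_mul_div, div_le_iff₀ hM0]
      have h3 : s * Real.sinh a ≤ s * (a * Real.cosh a) :=
        mul_le_mul_of_nonneg_left hsinh_cosh hs0.le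
      have h4 : s * (a * Real.cosh a) ≤ s * a * Real.cosh D := by
        rw [← mul_assoc]
        exact mul_le_mul_of_nonneg_left hcosha (mul_nonneg hs0.le ha0.le)
      have h5 : s * a * Real.cosh D ≤ Real.sinh (s * a) * Real.cosh D :=
        mul_le_mul_of_nonneg_right hsa.le hM0.le
      linarith

lemma tau_lb {K N s θ D : ℝ} (hN : 1 < N) (hs0 : 0 < s) (hs1 : s ≤ 1)
    (hθ : 0 ≤ θ) (hθD : K < 0 → θ * Real.sqrt (-K / (N - 1)) ≤ D) :
    ENNReal.ofReal (max (min s (1 - (1 - s) * Real.cosh D)) (s / Real.cosh D)) ≤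
      tauC K N s θ := by
  have hN1 : 0 < N - 1 := by linarith
  have hM : (1:ℝ) ≤ Real.cosh D := Real.one_le_cosh D
  have hM0 : (0:ℝ) < Real.cosh D := lt_of_lt_of_le one_pos hM
  set m := max (min s (1 - (1 - s) * Real.cosh D)) (s / Real.cosh D) with hm_def
  have hm0 : 0 < m := lt_of_lt_of_le (div_pos hs0 hM0) (le_max_right _ _)
  have hms : m ≤ s := max_le (min_le_left _ _) (div_le_self hs0.le hM)
  have hexp : (0:ℝ) ≤ 1 - 1 / N := by
    rw [sub_nonneg, div_le_one (by linarith : (0:ℝ) < N)]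
    linarith
  have h1 : ENNReal.ofReal m ^ (1 / N) ≤ ENNReal.ofReal s ^ (1 / N) :=
    ENNReal.rpow_le_rpow (ENNReal.ofReal_le_ofReal hms) (by positivity)
  have h2 : ENNReal.ofReal m ^ (1 - 1 / N) ≤ sigmaC K (N - 1) s θ ^ (1 - 1 / N) :=
    ENNReal.rpow_le_rpow (sigma_lb hN1 hs0 hs1 hθ hθD) hexp
  rw [tauC]
  calc ENNReal.ofReal m = ENNReal.ofReal m ^ ((1 / N) + (1 - 1 / N)) := by
        rw [show (1 / N) + (1 - 1 / N) = 1 by ring, ENNReal.rpow_one]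
    _ = ENNReal.ofReal m ^ (1 / N) * ENNReal.ofReal m ^ (1 - 1 / N) :=
        ENNReal.rpow_add _ _ (ENNReal.ofReal_pos.2 hm0).ne' ENNReal.ofReal_ne_top
    _ ≤ _ := mul_le_mul' h1 h2

end AuxLemmas

/-- `BM(K,N)` implies that `𝔪` is qualitatively non-degenerate on its
support. -/
theorem stmt11 (𝔪 : Measure X) (hfin : ∀ s : Set X, IsBounded s → 𝔪 s < ⊤)
    (K N : ℝ) (hN : 1 < N) (h : BM K N 𝔪) :
    ∀ R > (0:ℝ), ∀ xb ∈ mspt 𝔪, ∃ f : ℝ → ℝ,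
      (∀ t ∈ Set.Ioo (0:ℝ) 1, 0 < f t) ∧
      (1/2 : ℝ) < Filter.limsup f (nhdsWithin 0 (Set.Ioi 0)) ∧
      ∀ t ∈ Set.Ioo (0:ℝ) 1, ∀ x ∈ Metric.ball xb R ∩ mspt 𝔪, ∀ A : Set X,
        MeasurableSet A → A ⊆ Metric.ball xb R ∩ mspt 𝔪 →
        ENNReal.ofReal (f t) * 𝔪 A ≤ 𝔪 (MidSet t A ({x} : Set X)) := by
  intro R hR xb hxb
  have hNpos : (0:ℝ) < N := by linarith
  set D := 2 * R * Real.sqrt (max (-K) 0 / (N - 1)) with hD_def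
  have hD0 : 0 ≤ D := by positivity
  have hM1 : (1:ℝ) ≤ Real.cosh D := Real.one_le_cosh D
  have hM0 : (0:ℝ) < Real.cosh D := lt_of_lt_of_le one_pos hM1
  set g : ℝ → ℝ := fun t => max (min (1 - t) (1 - t * Real.cosh D)) ((1 - t) / Real.cosh D)
    with hg_def
  have hgpos : ∀ t ∈ Set.Ioo (0:ℝ) 1, 0 < g t := by
    intro t ht
    exact lt_of_lt_of_le (div_pos (by linarith [ht.2]) hM0) (le_max_right _ _)
  refine ⟨fun t => g t ^ N, fun t ht => Real.rpow_pos_of_pos (hgpos t ht) N, ?_, ?_⟩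
  · have hg0 : g 0 = 1 := by
      simp only [hg_def, sub_zero, zero_mul, min_self]
      rw [max_eq_left ((div_le_one hM0).2 hM1)]
    have hgc : Continuous g := by
      apply Continuous.max
      · exact (continuous_const.sub continuous_id).min
          (continuous_const.sub (continuous_id.mul continuous_const))
      · exact (continuous_const.sub continuous_id).div_const _
    have hfc : ContinuousAt (fun t => g t ^ N) 0 :=
      hgc.continuousAt.rpow_const (Or.inr hNpos.le)
    have htend : Filter.Tendsto (fun t => g t ^ N) (nhdsWithin 0 (Set.Ioi 0)) (nhds 1) := by
      have h : Filter.Tendsto (fun t => g t ^ N) (nhdsWithin 0 (Set.Ioi 0)) (nhds (g 0 ^ N)) :=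
        hfc.tendsto.mono_left nhdsWithin_le_nhds
      rwa [hg0, Real.one_rpow] at h
    rw [htend.limsup_eq]
    norm_num
  · intro t ht x hx A hA hAsub
    rcases A.eq_empty_or_nonempty with rfl | hAne
    · simp
    have ht0 : 0 < t := ht.1
    have ht1 : t < 1 := ht.2
    have hs0 : (0:ℝ) < 1 - t := by linarith
    have hgt : 0 < g t := hgpos t ht
    have key : ∀ θ : ℝ, 0 ≤ θ → (K < 0 → θ * Real.sqrt (-K / (N - 1)) ≤ D) →
        ENNReal.ofReal (g t) ≤ tauC K N (1 - t) θ := by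
      intro θ hθ hθD
      have h := tau_lb (K := K) (N := N) (s := 1 - t) (θ := θ) (D := D) hN hs0
        (by linarith) hθ hθD
      simpa only [sub_sub_cancel] using h
    have hτ : ENNReal.ofReal (g t) ≤ tauE K N (1 - t) (Theta K A ({x} : Set X)) := by
      rcases lt_or_ge K 0 with hK | hK
      · have hΘle : Theta K A ({x} : Set X) ≤ ENNReal.ofReal (2 * R) := by
          rw [Theta, if_neg (not_le.2 hK)]
          refine iSup₂_le fun p hp => iSup₂_le fun y hy => ?_
          obtain rfl : y = x := Set.mem_singleton_iff.1 hy
          have hp' : dist p xb < R := Metric.mem_ball.1 (hAsub hp).1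
          have hx' : dist y xb < R := Metric.mem_ball.1 hx.1
          calc edist p y ≤ edist p xb + edist xb y := edist_triangle _ _ _
            _ ≤ ENNReal.ofReal R + ENNReal.ofReal R := by
                refine add_le_add ?_ ?_
                · rw [edist_dist]; exact ENNReal.ofReal_le_ofReal hp'.le
                · rw [edist_comm, edist_dist]; exact ENNReal.ofReal_le_ofReal hx'.le
            _ = ENNReal.ofReal (2 * R) := by
                rw [← ENNReal.ofReal_add hR.le hR.le]; ring_nf
        have hΘtop : Theta K A ({x} : Set X) ≠ ⊤ :=
          ne_top_of_le_ne_top ENNReal.ofReal_ne_top hΘle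
        rw [tauE, if_neg hΘtop]
        refine key _ ENNReal.toReal_nonneg fun _ => ?_
        have hθ2R : (Theta K A ({x} : Set X)).toReal ≤ 2 * R :=
          ENNReal.toReal_le_of_le_ofReal (by positivity) hΘle
        rw [hD_def, max_eq_left (by linarith : (0:ℝ) ≤ -K)]
        exact mul_le_mul_of_nonneg_right hθ2R (Real.sqrt_nonneg _)
      · by_cases hΘtop : Theta K A ({x} : Set X) = ⊤
        · rw [tauE, if_pos hΘtop, if_neg (not_lt.2 hK)]
          rcases eq_or_lt_of_le hK with hK0 | hKpos
          · rw [if_pos hK0.symm]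
            exact ENNReal.ofReal_le_ofReal
              (max_le (min_le_left _ _) (div_le_self hs0.le hM1))
          · rw [if_neg hKpos.ne']
            exact le_top
        · rw [tauE, if_neg hΘtop]
          exact key _ ENNReal.toReal_nonneg fun hK' => absurd hK (not_le.2 hK')
    have hbm := h A ({x} : Set X) hA (measurableSet_singleton x) hAne
      (Set.singleton_nonempty x) (fun p hp => (hAsub hp).2)
      (Set.singleton_subset_iff.2 hx.2) N le_rfl t ⟨ht0.le, ht1.le⟩
    have hstep : ENNReal.ofReal (g t) * 𝔪 A ^ (1 / N) ≤ 𝔪 (MidSet t A ({x} : Set X)) ^ (1 / N) :=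
      le_trans (le_trans (mul_le_mul_left hτ _) le_self_add) hbm
    have hfin2 := ENNReal.rpow_le_rpow hstep hNpos.le
    rwa [ENNReal.mul_rpow_of_nonneg _ _ hNpos.le, ← ENNReal.rpow_mul, ← ENNReal.rpow_mul,
      one_div_mul_cancel hNpos.ne', ENNReal.rpow_one, ENNReal.rpow_one,
      ENNReal.ofReal_rpow_of_pos hgt] at hfin2


end
end

section
/- Let μ = ρ𝔪 be a bounded probability measure (bounded support, density bounded above and below away from zero on its support). Then there exists a sequence of step measures μ_n = ρ_n𝔪 converging to μ in W₂, such that {μ_n} ∪ {μ} is uniformly bounded and ρ_n^{−1/N'} → ρ^{−1/N'} in L¹(𝔪) for every N' > 1. -/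
open MeasureTheory Metric Set Filter Bornology
open scoped ENNReal NNReal

noncomputable section

variable {X : Type*} [MetricSpace X] [MeasurableSpace X] [BorelSpace X]

-- Hölder bound for reals
lemma aux_rpow_sub (x y a : ℝ) (hx : 0 ≤ x) (hy : 0 ≤ y) (ha : 0 < a) (ha1 : a ≤ 1) :
    |x ^ a - y ^ a| ≤ |x - y| ^ a := by
  wlog h : y ≤ x generalizing x y
  · rw [abs_sub_comm, abs_sub_comm x y]; exact this y x hy hx (le_of_not_ge h)
  have h1 : x ^ a ≤ (x - y) ^ a + y ^ a := by
    calc x ^ a = ((x - y) + y) ^ a := by ring_nf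
    _ ≤ (x - y) ^ a + y ^ a := by
        have := NNReal.rpow_add_le_add_rpow (x - y).toNNReal y.toNNReal ha.le ha1
        have e1 : ((x - y).toNNReal : ℝ) = x - y := Real.coe_toNNReal _ (by linarith)
        have e2 : ((y).toNNReal : ℝ) = y := Real.coe_toNNReal _ hy
        calc ((x - y) + y) ^ a = (((x-y).toNNReal + y.toNNReal : ℝ≥0) : ℝ) ^ a := by
              push_cast; rw [e1, e2]
        _ = (((x-y).toNNReal + y.toNNReal : ℝ≥0) ^ a : ℝ≥0) := by
              rw [← NNReal.coe_rpow]
        _ ≤ (((x-y).toNNReal ^ a + y.toNNReal ^ a : ℝ≥0) : ℝ) := by exact_mod_cast this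
        _ = (x - y) ^ a + y ^ a := by
              push_cast [NNReal.coe_rpow]; rw [e1, e2]
  have hxy : y ^ a ≤ x ^ a := Real.rpow_le_rpow hy h ha.le
  rw [abs_of_nonneg (by linarith), abs_of_nonneg (by linarith)]
  linarith
variable {α : Type*} [MeasurableSpace α]



-- neg rpow lipschitz-type bound
lemma aux_neg_rpow_sub (x y a c' : ℝ) (hc' : 0 < c') (hx : c' ≤ x) (hy : c' ≤ y)
    (ha : 0 < a) (ha1 : a ≤ 1) :
    |x ^ (-a) - y ^ (-a)| ≤ c' ^ (-2*a) * |x - y| ^ a := by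
  have hx0 : 0 < x := lt_of_lt_of_le hc' hx
  have hy0 : 0 < y := lt_of_lt_of_le hc' hy
  have hxa : 0 < x ^ a := Real.rpow_pos_of_pos hx0 a
  have hya : 0 < y ^ a := Real.rpow_pos_of_pos hy0 a
  have e : x ^ (-a) - y ^ (-a) = (y ^ a - x ^ a) / (x ^ a * y ^ a) := by
    rw [Real.rpow_neg hx0.le, Real.rpow_neg hy0.le]
    field_simp
  rw [e, abs_div, abs_of_pos (show (0:ℝ) < x ^ a * y ^ a by positivity)]
  have h1 : |y ^ a - x ^ a| ≤ |x - y| ^ a := by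
    rw [abs_sub_comm]
    exact aux_rpow_sub x y a hx0.le hy0.le ha ha1
  have hca : c' ^ a ≤ x ^ a := Real.rpow_le_rpow hc'.le hx ha.le
  have hca' : c' ^ a ≤ y ^ a := Real.rpow_le_rpow hc'.le hy ha.le
  have h2 : c' ^ (2*a) ≤ x ^ a * y ^ a := by
    have : c' ^ (2*a) = c' ^ a * c' ^ a := by
      rw [← Real.rpow_add hc']; ring_nf
    rw [this]
    exact mul_le_mul hca hca' (by positivity) (by positivity)
  calc |y ^ a - x ^ a| / (x ^ a * y ^ a) ≤ |x - y| ^ a / c' ^ (2*a) := by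
        apply div_le_div₀ (by positivity) h1 (by positivity) h2
  _ = c' ^ (-2*a) * |x - y| ^ a := by
        rw [div_eq_mul_inv, ← Real.rpow_neg hc'.le]; ring_nf



lemma aux_W2sq_le (𝔪 : Measure X) (f g : X → ℝ≥0∞) (hfm : Measurable f) (hgm : Measurable g)
    (S : Set X) (hS : MeasurableSet S)
    (hf0 : ∀ x ∉ S, f x = 0) (hg0 : ∀ x ∉ S, g x = 0)
    (hμ : IsProbabilityMeasure (𝔪.withDensity f)) (hν : IsProbabilityMeasure (𝔪.withDensity g)) :
    W2sq (𝔪.withDensity f) (𝔪.withDensity g) ≤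
      EMetric.diam S ^ 2 * ∫⁻ x, (g x - min (f x) (g x)) ∂𝔪 := by
  classical
  set r : X → ℝ≥0∞ := fun x => min (f x) (g x) with hr
  have hrm : Measurable r := hfm.min hgm
  have hfrm : Measurable (fun x => f x - r x) := hfm.sub hrm
  have hgrm : Measurable (fun x => g x - r x) := hgm.sub hrm
  set ν₀ : Measure X := 𝔪.withDensity r with hν₀
  set α : Measure X := 𝔪.withDensity (fun x => f x - r x) with hα
  set β : Measure X := 𝔪.withDensity (fun x => g x - r x) with hβ
  have hfsplit : 𝔪.withDensity f = ν₀ + α := by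
    rw [hν₀, hα, ← withDensity_add_left hrm]
    congr 1; funext x; exact (add_tsub_cancel_of_le (min_le_left _ _)).symm
  have hgsplit : 𝔪.withDensity g = ν₀ + β := by
    rw [hν₀, hβ, ← withDensity_add_left hrm]
    congr 1; funext x; exact (add_tsub_cancel_of_le (min_le_right _ _)).symm
  have hν₀fin : ν₀ univ ≤ 1 := by
    have := hμ.measure_univ
    rw [hfsplit] at this
    simp only [Measure.add_apply] at this
    exact le_trans le_self_add this.le
  have hαu : ν₀ univ + α univ = 1 := by
    have := hμ.measure_univ; rw [hfsplit] at this; simpa using this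
  have hβu : ν₀ univ + β univ = 1 := by
    have := hν.measure_univ; rw [hgsplit] at this; simpa using this
  have hαβ : α univ = β univ := by
    have hne : ν₀ univ ≠ ⊤ := (lt_of_le_of_lt hν₀fin ENNReal.one_lt_top).ne
    have := hαu.trans hβu.symm
    exact (ENNReal.add_right_inj hne).1 this
  set ε : ℝ≥0∞ := β univ with hε
  have hεle : ε ≤ 1 := le_trans le_add_self hβu.le
  have hεne : ε ≠ ⊤ := (lt_of_le_of_lt hεle ENNReal.one_lt_top).ne
  have hαfin : α univ ≠ ⊤ := by rw [hαβ]; exact hεne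
  haveI : IsFiniteMeasure α := ⟨lt_top_iff_ne_top.2 hαfin⟩
  haveI : IsFiniteMeasure β := ⟨lt_top_iff_ne_top.2 hεne⟩
  have hΔ : Measurable (fun x : X => (x, x)) := measurable_id.prodMk measurable_id
  set π : Measure (X × X) := ν₀.map (fun x => (x, x)) + ε⁻¹ • (α.prod β) with hπ
  have hsmul : (ε⁻¹ * ε) • α = α := by
    rcases eq_or_ne ε 0 with h0 | h0
    · have : α = 0 := Measure.measure_univ_eq_zero.1 (hαβ.trans h0)
      simp [this]
    · rw [ENNReal.inv_mul_cancel h0 hεne, one_smul]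
  have hsmul' : (ε⁻¹ * α univ) • β = β := by
    rw [hαβ]
    rcases eq_or_ne ε 0 with h0 | h0
    · have : β = 0 := Measure.measure_univ_eq_zero.1 (hε ▸ h0)
      simp [this]
    · rw [ENNReal.inv_mul_cancel h0 hεne, one_smul]
  have hcoup : IsCoupling (𝔪.withDensity f) (𝔪.withDensity g) π := by
    constructor
    · rw [hπ, Measure.map_add _ _ measurable_fst, Measure.map_smul,
        Measure.map_map measurable_fst hΔ]
      have h1 : (Prod.fst ∘ fun x : X => (x, x)) = id := rfl
      rw [h1, Measure.map_id, Measure.map_fst_prod, hfsplit, smul_smul, ← hε, hsmul]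
    · rw [hπ, Measure.map_add _ _ measurable_snd, Measure.map_smul,
        Measure.map_map measurable_snd hΔ]
      have h1 : (Prod.snd ∘ fun x : X => (x, x)) = id := rfl
      rw [h1, Measure.map_id, Measure.map_snd_prod, hgsplit, smul_smul, hsmul']
  -- α and β vanish outside S
  have hαS : α Sᶜ = 0 := by
    rw [hα, withDensity_apply _ hS.compl]
    have h0 : ∀ x ∈ Sᶜ, f x - r x = (fun _ : X => (0:ℝ≥0∞)) x := by
      intro x hx
      simp only [hr, hf0 x hx]
      simp
    rw [setLIntegral_congr_fun hS.compl h0]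
    simp
  have hβS : β Sᶜ = 0 := by
    rw [hβ, withDensity_apply _ hS.compl]
    have h0 : ∀ x ∈ Sᶜ, g x - r x = (fun _ : X => (0:ℝ≥0∞)) x := by
      intro x hx
      simp only [hr, hg0 x hx]
      simp
    rw [setLIntegral_congr_fun hS.compl h0]
    simp
  -- the product measure is concentrated on S ×ˢ S
  have hprodnull : (α.prod β) ((S ×ˢ S)ᶜ) = 0 := by
    have hsub : (S ×ˢ S)ᶜ ⊆ (Sᶜ ×ˢ univ) ∪ (univ ×ˢ Sᶜ) := by
      intro p hp
      simp only [Set.mem_compl_iff, Set.mem_prod, not_and] at hp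
      by_cases h1 : p.1 ∈ S
      · exact Or.inr ⟨Set.mem_univ _, hp h1⟩
      · exact Or.inl ⟨h1, Set.mem_univ _⟩
    refine le_antisymm (le_trans (measure_mono hsub) ?_) zero_le
    refine le_trans (measure_union_le _ _) ?_
    rw [Measure.prod_prod, Measure.prod_prod, hαS, hβS]
    simp
  have hrestr : (α.prod β).restrict (S ×ˢ S) = α.prod β := by
    apply Measure.restrict_eq_self_of_ae_mem
    rw [MeasureTheory.ae_iff]
    exact hprodnull
  set D : ℝ≥0∞ := EMetric.diam S with hD
  have hcost2 : ∫⁻ p, edist p.1 p.2 ^ 2 ∂(α.prod β) ≤ D ^ 2 * (ε * ε) := by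
    calc ∫⁻ p, edist p.1 p.2 ^ 2 ∂(α.prod β)
        = ∫⁻ p in S ×ˢ S, edist p.1 p.2 ^ 2 ∂(α.prod β) := by rw [hrestr]
      _ ≤ ∫⁻ _ in S ×ˢ S, D ^ 2 ∂(α.prod β) := by
          refine setLIntegral_mono measurable_const (fun p hp => ?_)
          exact pow_le_pow_left' (EMetric.edist_le_diam_of_mem hp.1 hp.2) 2
      _ = D ^ 2 * (α.prod β) (S ×ˢ S) := setLIntegral_const _ _
      _ ≤ D ^ 2 * (ε * ε) := by
          rw [Measure.prod_prod]
          refine mul_le_mul_right (mul_le_mul' ?_ ?_) _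
          · rw [← hαβ]; exact measure_mono (Set.subset_univ _)
          · rw [hε]; exact measure_mono (Set.subset_univ _)
  have hcost : ∫⁻ p, edist p.1 p.2 ^ 2 ∂π ≤ D ^ 2 * ε := by
    rw [hπ, lintegral_add_measure, lintegral_smul_measure]
    have h1 : ∫⁻ p, edist p.1 p.2 ^ 2 ∂(ν₀.map (fun x => (x, x))) = 0 := by
      refine le_antisymm (le_trans (lintegral_map_le _ (fun x : X => (x, x))) ?_) zero_le
      simp [edist_self]
    rw [h1, zero_add]
    rcases eq_or_ne ε 0 with h0 | h0
    · have hβ0 : β = 0 := Measure.measure_univ_eq_zero.1 (hε ▸ h0)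
      have : α.prod β = 0 := by rw [hβ0, Measure.prod_zero]
      simp [this]
    · calc ε⁻¹ * ∫⁻ p, edist p.1 p.2 ^ 2 ∂(α.prod β) ≤ ε⁻¹ * (D ^ 2 * (ε * ε)) :=
            mul_le_mul_right hcost2 _
        _ = D ^ 2 * ε * (ε⁻¹ * ε) := by ring
        _ = D ^ 2 * ε := by rw [ENNReal.inv_mul_cancel h0 hεne, mul_one]
  have hεeq : ε = ∫⁻ x, (g x - min (f x) (g x)) ∂𝔪 := by
    rw [hε, hβ, withDensity_apply _ MeasurableSet.univ, Measure.restrict_univ]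
  calc W2sq (𝔪.withDensity f) (𝔪.withDensity g)
      ≤ ∫⁻ p, edist p.1 p.2 ^ 2 ∂π := iInf₂_le π hcoup
    _ ≤ D ^ 2 * ε := hcost
    _ = EMetric.diam S ^ 2 * ∫⁻ x, (g x - min (f x) (g x)) ∂𝔪 := by rw [hεeq]


lemma aux_withDensity_finset_sum {α : Type*} [MeasurableSpace α] {ι : Type*} (μ : MeasureTheory.Measure α) (s : Finset ι)
    (f : ι → α → ℝ≥0∞) (hf : ∀ i, Measurable (f i)) :
    μ.withDensity (fun x => ∑ i ∈ s, f i x) = ∑ i ∈ s, μ.withDensity (f i) := by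
  classical
  induction s using Finset.induction_on with
  | empty => simp [MeasureTheory.withDensity_zero]
  | @insert a s h ih =>
    rw [Finset.sum_insert h]
    have e : (fun x => ∑ i ∈ insert a s, f i x) = f a + (fun x => ∑ i ∈ s, f i x) := by
      funext x; rw [Finset.sum_insert h]; rfl
    rw [e, withDensity_add_left (hf a), ih]

lemma aux_close (sn ρx gx u cM Cc : ℝ) (hu : 0 < u)
    (hsge : 1 ≤ sn) (h1 : ρx - u ≤ gx) (h2 : gx ≤ ρx) (h3 : 0 ≤ ρx)
    (h4 : (sn - 1) * ρx ≤ Cc * u) (h5 : sn * u ≤ cM * u) :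
    |sn * gx - ρx| ≤ (cM + Cc) * u := by
  have p1 : sn * (ρx - u - gx) ≤ 0 :=
    mul_nonpos_of_nonneg_of_nonpos (by linarith) (by linarith)
  have p2 : sn * (gx - ρx) ≤ 0 :=
    mul_nonpos_of_nonneg_of_nonpos (by linarith) (by linarith)
  have p4 : 0 ≤ (sn - 1) * ρx := mul_nonneg (by linarith) h3
  rw [abs_le]
  constructor
  · nlinarith [p1, p4, h5]
  · nlinarith [p2, h4]


set_option maxHeartbeats 3000000 in
/-- every bounded probability measure `μ = ρ𝔪` is the `W₂`-limit of a
uniformly bounded sequence of step measures `μ_n = ρ_n 𝔪` with `ρ_n^{-1/N'} → ρ^{-1/N'}`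
in `L¹(𝔪)` for every `N' > 1`. -/
theorem stmt12 (𝔪 : Measure X) (hfin : ∀ s : Set X, IsBounded s → 𝔪 s < ⊤)
    (ρ : X → ℝ) (hρm : Measurable ρ) (S : Set X) (hS : MeasurableSet S)
    (hSb : IsBounded S) (c C : ℝ) (hc : 0 < c) (hcC : c < C)
    (hprob : IsProbabilityMeasure (𝔪.withDensity fun x => ENNReal.ofReal (ρ x)))
    (hsupp : ∀ x ∈ Sᶜ, ρ x = 0)
    (hbd : ∀ᵐ x ∂𝔪.restrict S, c ≤ ρ x ∧ ρ x ≤ C) :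
    ∃ (ρn : ℕ → X → ℝ) (c' C' : ℝ), 0 < c' ∧ c' ≤ C' ∧
      (∀ n, Measurable (ρn n)) ∧
      (∀ n, IsProbabilityMeasure (𝔪.withDensity fun x => ENNReal.ofReal (ρn n x))) ∧
      (∀ n, IsStepMeasure 𝔪 (𝔪.withDensity fun x => ENNReal.ofReal (ρn n x))) ∧
      (∀ n, ∀ x ∈ Sᶜ, ρn n x = 0) ∧
      (∀ n, ∀ᵐ x ∂𝔪.restrict S, c' ≤ ρn n x ∧ ρn n x ≤ C') ∧
      (∀ᵐ x ∂𝔪.restrict S, c' ≤ ρ x ∧ ρ x ≤ C') ∧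
      Tendsto (fun n => W2 (𝔪.withDensity fun x => ENNReal.ofReal (ρn n x))
        (𝔪.withDensity fun x => ENNReal.ofReal (ρ x))) atTop (nhds 0) ∧
      ∀ N' : ℝ, 1 < N' →
        Tendsto (fun n => ∫ x, |ρn n x ^ (-(1 / N')) - ρ x ^ (-(1 / N'))| ∂𝔪)
          atTop (nhds 0) := by
  classical
  have hC : 0 < C := hc.trans hcC
  have hae : ∀ᵐ x ∂𝔪, x ∈ S → (c ≤ ρ x ∧ ρ x ≤ C) := (ae_restrict_iff' hS).1 hbd
  have hMne : 𝔪 S ≠ ⊤ := (hfin S hSb).ne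
  -- total mass one
  have h1 : ∫⁻ x, ENNReal.ofReal (ρ x) ∂𝔪 = 1 := by
    have := hprob.measure_univ
    rwa [withDensity_apply _ MeasurableSet.univ, Measure.restrict_univ] at this
  have hcompl0 : ∫⁻ x in Sᶜ, ENNReal.ofReal (ρ x) ∂𝔪 = 0 := by
    have h0 : ∀ x ∈ Sᶜ, ENNReal.ofReal (ρ x) = (fun _ : X => (0:ℝ≥0∞)) x := by
      intro x hx; simp [hsupp x hx]
    rw [setLIntegral_congr_fun hS.compl h0]
    simp
  have h1S : ∫⁻ x in S, ENNReal.ofReal (ρ x) ∂𝔪 = 1 := by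
    have := lintegral_add_compl (fun x => ENNReal.ofReal (ρ x)) hS (μ := 𝔪)
    rw [hcompl0, add_zero] at this
    rw [this, h1]
  -- bounds on 𝔪 S
  have hbdS : ∀ᵐ x ∂𝔪.restrict S, c ≤ ρ x ∧ ρ x ≤ C := hbd
  have hcM : ENNReal.ofReal c * 𝔪 S ≤ 1 := by
    rw [← h1S, ← setLIntegral_const S (ENNReal.ofReal c)]
    refine lintegral_mono_ae ?_
    filter_upwards [hbdS] with x hx
    exact ENNReal.ofReal_le_ofReal hx.1
  have hCM : (1:ℝ≥0∞) ≤ ENNReal.ofReal C * 𝔪 S := by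
    rw [← h1S, ← setLIntegral_const S (ENNReal.ofReal C)]
    refine lintegral_mono_ae ?_
    filter_upwards [hbdS] with x hx
    exact ENNReal.ofReal_le_ofReal hx.2
  have hM0 : 𝔪 S ≠ 0 := by
    intro h; rw [h, mul_zero] at hCM; exact (not_le.2 zero_lt_one) hCM
  set M : ℝ := (𝔪 S).toReal with hMdef
  have hMpos : 0 < M := ENNReal.toReal_pos hM0 hMne
  have hcM' : c * M ≤ 1 := by
    have := ENNReal.toReal_mono (by simp) hcM
    rwa [ENNReal.toReal_mul, ENNReal.toReal_ofReal hc.le, ENNReal.toReal_one] at this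
  have hCM' : (1:ℝ) ≤ C * M := by
    have := ENNReal.toReal_mono (ENNReal.mul_ne_top ENNReal.ofReal_ne_top hMne) hCM
    rwa [ENNReal.toReal_mul, ENNReal.toReal_ofReal hC.le, ENNReal.toReal_one] at this
  -- step functions
  set clamp : X → ℝ := fun x => min C (max c (ρ x)) with hclampdef
  have hclampm : Measurable clamp := measurable_const.min (measurable_const.max hρm)
  have hclamp_mem : ∀ x, c ≤ clamp x ∧ clamp x ≤ C := fun x =>
    ⟨le_min hcC.le (le_max_left _ _), min_le_left _ _⟩
  set σ : ℕ → X → ℕ := fun n x => ⌊(clamp x - c) * (n + 1)⌋₊ with hσdef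
  have hσm : ∀ n, Measurable (σ n) :=
    fun n => ((hclampm.sub measurable_const).mul_const _).nat_floor
  set g : ℕ → X → ℝ := fun n => S.indicator (fun x => c + (σ n x : ℝ) / (n + 1)) with hgdef
  have hgm : ∀ n, Measurable (g n) := fun n =>
    (measurable_const.add ((measurable_from_nat.comp (hσm n) : Measurable fun x => ((σ n x : ℕ) : ℝ)).div_const _)).indicator hS
  -- pointwise facts about g on S
  have hg_lb : ∀ n, ∀ x ∈ S, c ≤ g n x := by
    intro n x hx
    rw [hgdef]
    simp only [Set.indicator_of_mem hx]
    have : (0:ℝ) ≤ (σ n x : ℝ) / (n + 1) := by positivity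
    linarith
  have hg_le_clamp : ∀ n, ∀ x ∈ S, g n x ≤ clamp x := by
    intro n x hx
    rw [hgdef]
    simp only [Set.indicator_of_mem hx]
    have hnn : (0:ℝ) ≤ (clamp x - c) * (n + 1) := by
      have := (hclamp_mem x).1; have h2 : (0:ℝ) < n + 1 := by positivity
      nlinarith
    have hfl : (σ n x : ℝ) ≤ (clamp x - c) * (n + 1) := Nat.floor_le hnn
    have h2 : (0:ℝ) < n + 1 := by positivity
    have h3 : (σ n x : ℝ) / (n + 1) ≤ clamp x - c := (div_le_iff₀ h2).2 hfl
    linarith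
  have hg_ub : ∀ n, ∀ x ∈ S, g n x ≤ C := fun n x hx =>
    (hg_le_clamp n x hx).trans (hclamp_mem x).2
  have hclamp_close : ∀ n x, clamp x - 1 / (n + 1) ≤ c + (σ n x : ℝ) / (n + 1) := by
    intro n x
    have h2 : (0:ℝ) < n + 1 := by positivity
    have := Nat.sub_one_lt_floor ((clamp x - c) * (n + 1))
    have h5 : (clamp x - 1/(n+1)) * (n+1) ≤ (c + (σ n x:ℝ)/(n+1)) * (n+1) := by
      have e1 : (clamp x - 1/(n+1)) * (n+1) = clamp x * (n+1) - 1 := by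
        field_simp
      have e2 : (c + (σ n x:ℝ)/(n+1)) * (n+1) = c * (n+1) + σ n x := by
        field_simp
      rw [e1, e2]
      nlinarith [this.le]
    exact le_of_mul_le_mul_right h5 h2
  -- split lintegral over S for functions vanishing off S
  have hsplit : ∀ f : X → ℝ≥0∞, (∀ x ∈ Sᶜ, f x = 0) →
      ∫⁻ x, f x ∂𝔪 = ∫⁻ x in S, f x ∂𝔪 := by
    intro f h0
    rw [← lintegral_add_compl f hS (μ := 𝔪)]
    have h0' : ∀ x ∈ Sᶜ, f x = (fun _ : X => (0:ℝ≥0∞)) x := h0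
    rw [setLIntegral_congr_fun hS.compl h0']
    simp
  -- masses
  set m : ℕ → ℝ≥0∞ := fun n => ∫⁻ x, ENNReal.ofReal (g n x) ∂𝔪 with hmdef
  have hg0 : ∀ n, ∀ x ∈ Sᶜ, g n x = 0 := by
    intro n x hx; rw [hgdef]; exact Set.indicator_of_notMem hx _
  have hmS : ∀ n, m n = ∫⁻ x in S, ENNReal.ofReal (g n x) ∂𝔪 := by
    intro n; rw [hmdef]
    exact hsplit _ (fun x hx => by rw [hg0 n x hx]; simp)
  have hm_lb : ∀ n, ENNReal.ofReal c * 𝔪 S ≤ m n := by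
    intro n
    rw [hmS n, ← setLIntegral_const S (ENNReal.ofReal c)]
    refine lintegral_mono_ae ((ae_restrict_iff' hS).2 (MeasureTheory.ae_of_all _ ?_))
    exact fun x hx => ENNReal.ofReal_le_ofReal (hg_lb n x hx)
  have hm_ub : ∀ n, m n ≤ 1 := by
    intro n
    rw [hmS n, ← h1S]
    refine lintegral_mono_ae ?_
    filter_upwards [hbdS, (ae_restrict_iff' hS).2 (MeasureTheory.ae_of_all _
      (fun x hx => hg_le_clamp n x hx))] with x hx1 hx2
    refine ENNReal.ofReal_le_ofReal (le_trans hx2 ?_)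
    rw [hclampdef]
    simp only
    rw [max_eq_right hx1.1, min_eq_right hx1.2]
  have hm0 : ∀ n, m n ≠ 0 := by
    intro n h
    have : ENNReal.ofReal c * 𝔪 S = 0 := le_antisymm (h ▸ hm_lb n) zero_le
    rcases mul_eq_zero.1 this with h' | h'
    · rw [ENNReal.ofReal_eq_zero] at h'; linarith
    · exact hM0 h'
  have hmtop : ∀ n, m n ≠ ⊤ := fun n => (lt_of_le_of_lt (hm_ub n) ENNReal.one_lt_top).ne
  set mr : ℕ → ℝ := fun n => (m n).toReal with hmrdef
  have hmr_pos : ∀ n, 0 < mr n := fun n => ENNReal.toReal_pos (hm0 n) (hmtop n)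
  have hmr_le_one : ∀ n, mr n ≤ 1 := by
    intro n
    have := ENNReal.toReal_mono (by simp) (hm_ub n)
    simpa using this
  have hmr_lb : ∀ n, c * M ≤ mr n := by
    intro n
    have := ENNReal.toReal_mono (hmtop n) (hm_lb n)
    rwa [ENNReal.toReal_mul, ENNReal.toReal_ofReal hc.le] at this
  -- closeness of masses: 1 ≤ m n + (1/(n+1)) * 𝔪 S
  have hm_close : ∀ n, (1:ℝ≥0∞) ≤ m n + ENNReal.ofReal (1/(n+1)) * 𝔪 S := by
    intro n
    rw [hmS n, ← h1S, ← setLIntegral_const S (ENNReal.ofReal (1/(n+1)))]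
    rw [← lintegral_add_right _ measurable_const]
    refine lintegral_mono_ae ?_
    filter_upwards [hbdS, (ae_restrict_iff' hS).2 (MeasureTheory.ae_of_all _
      (fun x (hx : x ∈ S) => hclamp_close n x)),
      (ae_restrict_iff' hS).2 (MeasureTheory.ae_of_all _
      (fun x (hx : x ∈ S) => Set.indicator_of_mem hx (fun x => c + (σ n x : ℝ) / (n + 1))))]
      with x hx1 hx2 hx3
    have hcl : clamp x = ρ x := by
      rw [hclampdef]; simp only; rw [max_eq_right hx1.1, min_eq_right hx1.2]
    have : ρ x ≤ g n x + 1/(n+1) := by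
      rw [hgdef]
      simp only [hx3]
      rw [hcl] at hx2
      linarith
    calc ENNReal.ofReal (ρ x) ≤ ENNReal.ofReal (g n x + 1/(n+1)) := ENNReal.ofReal_le_ofReal this
      _ ≤ ENNReal.ofReal (g n x) + ENNReal.ofReal (1/(n+1)) := ENNReal.ofReal_add_le
  have hmr_close : ∀ n, 1 - M * (1/(n+1)) ≤ mr n := by
    intro n
    have h2 : (0:ℝ) < (n:ℝ) + 1 := by positivity
    have := ENNReal.toReal_mono (ENNReal.add_ne_top.2 ⟨hmtop n,
      ENNReal.mul_ne_top ENNReal.ofReal_ne_top hMne⟩) (hm_close n)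
    rw [ENNReal.toReal_add (hmtop n) (ENNReal.mul_ne_top ENNReal.ofReal_ne_top hMne),
      ENNReal.toReal_mul, ENNReal.toReal_ofReal (by positivity), ENNReal.toReal_one] at this
    have : 1 ≤ mr n + 1/(n+1) * M := this
    linarith
  -- normalization
  set sn : ℕ → ℝ := fun n => (mr n)⁻¹ with hsndef
  have hs_pos : ∀ n, 0 < sn n := fun n => inv_pos.2 (hmr_pos n)
  have hs_ge_one : ∀ n, 1 ≤ sn n := fun n => (one_le_inv₀ (hmr_pos n)).2 (hmr_le_one n)
  have hs_ub : ∀ n, sn n ≤ (c * M)⁻¹ := fun n =>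
    inv_anti₀ (by positivity) (hmr_lb n)
  set K₀ : ℝ := (c * M)⁻¹ + C / c with hK₀def
  have hs_close : ∀ n, sn n - 1 ≤ (1/c) * (1/(n+1)) := by
    intro n
    have h2 : (0:ℝ) < (n:ℝ) + 1 := by positivity
    have hlb := hmr_lb n
    have hcl := hmr_close n
    have hpos := hmr_pos n
    rw [hsndef]
    simp only
    have e : (mr n)⁻¹ - 1 = (1 - mr n) / mr n := by field_simp
    rw [e]
    have hd : (1 - mr n) / mr n ≤ (M * (1/(n+1))) / (c * M) := by
      apply div_le_div₀ (by positivity) (by linarith) (by positivity) (hmr_lb n)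
    have he : (M * (1/(n+1))) / (c * M) = 1/c * (1/(n+1)) := by
      rw [div_eq_iff (by positivity : (c*M) ≠ 0)]
      field_simp
    linarith
  have hclose : ∀ n, ∀ᵐ x ∂𝔪.restrict S, |sn n * g n x - ρ x| ≤ K₀ * (1/(n+1)) := by
    intro n
    filter_upwards [hbdS, (ae_restrict_iff' hS).2 (MeasureTheory.ae_of_all _
      (fun x (hx : x ∈ S) => hclamp_close n x)),
      (ae_restrict_iff' hS).2 (MeasureTheory.ae_of_all _
      (fun x (hx : x ∈ S) => Set.indicator_of_mem hx (fun x => c + (σ n x : ℝ) / (n + 1)))),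
      (ae_restrict_iff' hS).2 (MeasureTheory.ae_of_all _
      (fun x (hx : x ∈ S) => hg_le_clamp n x hx))] with x hx1 hx2 hx3 hx4
    have h2 : (0:ℝ) < (n:ℝ) + 1 := by positivity
    have hcl : clamp x = ρ x := by
      rw [hclampdef]; simp only; rw [max_eq_right hx1.1, min_eq_right hx1.2]
    have hgx : g n x = c + (σ n x : ℝ) / (n + 1) := by rw [hgdef]; exact hx3
    have hgub : g n x ≤ ρ x := by rw [← hcl]; exact hx4
    have hglb : ρ x - 1/(n+1) ≤ g n x := by rw [hgx, ← hcl]; exact hx2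
    have hsub := hs_ub n
    have hsclose := hs_close n
    have hsge := hs_ge_one n
    have hMp := hMpos
    have p3 : (sn n - 1) * ρ x ≤ (C/c) * (1/(n+1)) := by
      have := mul_le_mul hsclose hx1.2 (by linarith) (by positivity :
        (0:ℝ) ≤ 1/c * (1/(n+1)))
      calc (sn n - 1) * ρ x ≤ (1/c * (1/(n+1))) * C := this
        _ = (C/c) * (1/(n+1)) := by ring
    have p5 : sn n * (1/(n+1)) ≤ (c*M)⁻¹ * (1/(n+1)) :=
      mul_le_mul_of_nonneg_right hsub (by positivity)
    rw [hK₀def]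
    exact aux_close _ _ _ _ _ _ (by positivity) hsge hglb hgub (by linarith) p3 p5
  -- the approximating densities
  set ρn : ℕ → X → ℝ := fun n x => sn n * g n x with hρndef
  have hρnm : ∀ n, Measurable (ρn n) := fun n => (hgm n).const_mul _
  have hρn0 : ∀ n, ∀ x ∈ Sᶜ, ρn n x = 0 := by
    intro n x hx; rw [hρndef]; simp only; rw [hg0 n x hx, mul_zero]
  have hρn_lb : ∀ n, ∀ x ∈ S, c ≤ ρn n x := by
    intro n x hx
    have := hg_lb n x hx
    have := hs_ge_one n
    rw [hρndef]; simp only; nlinarith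
  have hρn_ub : ∀ n, ∀ x ∈ S, ρn n x ≤ C * (c*M)⁻¹ := by
    intro n x hx
    have h1 := hg_ub n x hx
    have h2 := hs_ub n
    have h3 := hg_lb n x hx
    have h4 := hs_pos n
    rw [hρndef]; simp only; nlinarith
  have hlint_n : ∀ n, ∫⁻ x, ENNReal.ofReal (ρn n x) ∂𝔪 = 1 := by
    intro n
    have : (fun x => ENNReal.ofReal (ρn n x)) =
        fun x => ENNReal.ofReal (sn n) * ENNReal.ofReal (g n x) := by
      funext x
      rw [hρndef]
      exact ENNReal.ofReal_mul (hs_pos n).le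
    rw [this, lintegral_const_mul _ ((hgm n).ennreal_ofReal)]
    have hmn : ∫⁻ x, ENNReal.ofReal (g n x) ∂𝔪 = m n := rfl
    rw [hmn]
    rw [hsndef]
    simp only
    rw [ENNReal.ofReal_inv_of_pos (hmr_pos n), hmrdef]
    simp only
    rw [ENNReal.ofReal_toReal (hmtop n), ENNReal.inv_mul_cancel (hm0 n) (hmtop n)]
  -- the constants
  have hc'c : c * (C*M)⁻¹ ≤ c := by
    have h1 : (C*M)⁻¹ ≤ 1 := inv_le_one_of_one_le₀ (by linarith)
    nlinarith
  have hCC' : C ≤ C * (c*M)⁻¹ := by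
    have h1 : (1:ℝ) ≤ (c*M)⁻¹ := (one_le_inv₀ (by positivity)).2 (by linarith)
    nlinarith
  refine ⟨ρn, c * (C*M)⁻¹, C * (c*M)⁻¹, by positivity, ?_, hρnm, ?_, ?_, hρn0, ?_, ?_, ?_, ?_⟩
  · -- c' ≤ C'
    have h1 : (C*M)⁻¹ ≤ (c*M)⁻¹ := by
      apply inv_anti₀ (by positivity)
      nlinarith
    have h2 : (0:ℝ) < (C*M)⁻¹ := by positivity
    nlinarith
  · -- probability
    intro n
    constructor
    rw [withDensity_apply _ MeasurableSet.univ, Measure.restrict_univ]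
    exact hlint_n n
  · -- step measure
    intro n
    set Kn : ℕ := ⌊(C - c) * (n+1)⌋₊ with hKndef
    set A : Fin (Kn+1) → Set X := fun k => S ∩ σ n ⁻¹' {(k:ℕ)} with hAdef
    have hAs : ∀ k, MeasurableSet (A k) :=
      fun k => hS.inter ((hσm n) (measurableSet_singleton _))
    have hAsub : ∀ k, A k ⊆ S := fun k => Set.inter_subset_left
    have hAmem : ∀ k (x : X), x ∈ A k ↔ (x ∈ S ∧ σ n x = (k:ℕ)) := by
      intro k x; rw [hAdef]; simp [Set.mem_inter_iff]
    have hdisj : Pairwise (Function.onFun Disjoint A) := by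
      intro k l hkl
      rw [Function.onFun, Set.disjoint_left]
      intro x hxk hxl
      rw [hAmem] at hxk hxl
      exact hkl (Fin.ext ((hxk.2.symm.trans hxl.2)))
    set v : Fin (Kn+1) → ℝ≥0∞ :=
      fun k => ENNReal.ofReal (sn n * (c + ((k:ℕ):ℝ) / (n+1))) with hvdef
    have hpointeq : (fun x => ENNReal.ofReal (ρn n x)) =
        fun x => ∑ k : Fin (Kn+1), (A k).indicator (fun _ => v k) x := by
      funext x
      by_cases hx : x ∈ S
      · have hσle : σ n x ≤ Kn := by
          rw [hσdef, hKndef]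
          apply Nat.floor_le_floor
          have h2 : (0:ℝ) ≤ (n:ℝ) + 1 := by positivity
          have := (hclamp_mem x).2
          have := (hclamp_mem x).1
          nlinarith
        have hlt : σ n x < Kn + 1 := Nat.lt_succ_of_le hσle
        set k₀ : Fin (Kn+1) := ⟨σ n x, hlt⟩ with hk₀
        rw [Finset.sum_eq_single k₀]
        · have hxk : x ∈ A k₀ := by rw [hAmem]; exact ⟨hx, rfl⟩
          rw [Set.indicator_of_mem hxk, hvdef]
          simp only
          rw [hρndef]
          simp only
          rw [hgdef]
          simp only [Set.indicator_of_mem hx]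
          rfl
        · intro k _ hk
          apply Set.indicator_of_notMem
          rw [hAmem]
          rintro ⟨-, hsk⟩
          exact hk (Fin.ext hsk.symm)
        · intro h; exact absurd (Finset.mem_univ k₀) h
      · rw [hρn0 n x hx]
        simp only [ENNReal.ofReal_zero]
        symm
        apply Finset.sum_eq_zero
        intro k _
        exact Set.indicator_of_notMem (fun hxk => hx (hAsub k hxk)) _
    have hmeaseq : 𝔪.withDensity (fun x => ENNReal.ofReal (ρn n x)) =
        ∑ k : Fin (Kn+1), v k • 𝔪.restrict (A k) := by
      rw [hpointeq, aux_withDensity_finset_sum 𝔪 Finset.univ _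
        (fun k => measurable_const.indicator (hAs k))]
      exact Finset.sum_congr rfl (fun k _ => by
        rw [withDensity_indicator (hAs k), withDensity_const])
    have hAfin : ∀ k, 𝔪 (A k) < ⊤ :=
      fun k => lt_of_le_of_lt (measure_mono (hAsub k)) (hfin S hSb)
    set pred : Fin (Kn+1) → Prop := fun k => 0 < 𝔪 (A k) with hpreddef
    haveI : DecidablePred pred := Classical.decPred pred
    set e : Fin (Fintype.card {k // pred k}) ≃ {k // pred k} :=
      (Fintype.equivFin {k // pred k}).symm with hedef
    refine ⟨Fintype.card {k // pred k}, fun i => A (e i), fun i => v (e i) * 𝔪 (A (e i)),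
      fun i => hAs _, ?_, fun i => ⟨(e i).2, hAfin _⟩, ?_⟩
    · intro i j hij
      have : ((e i : {k // pred k}) : Fin (Kn+1)) ≠ ((e j : {k // pred k}) : Fin (Kn+1)) :=
        fun h => hij (e.injective (Subtype.ext h))
      exact hdisj this
    · rw [hmeaseq]
      have h1 : ∀ p : {k // pred k},
          (v p * 𝔪 (A p)) • normRestrict 𝔪 (A p) = v p • 𝔪.restrict (A p) := by
        intro p
        rw [normRestrict, smul_smul, mul_assoc,
          ENNReal.mul_inv_cancel (ne_of_gt p.2) (hAfin p).ne, mul_one]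
      have h2 : ∑ i, (v (e i) * 𝔪 (A (e i))) • normRestrict 𝔪 (A (e i)) =
          ∑ p : {k // pred k}, (v p * 𝔪 (A p)) • normRestrict 𝔪 (A p) :=
        Equiv.sum_comp e (fun p => (v p * 𝔪 (A p)) • normRestrict 𝔪 (A (p : Fin (Kn+1))))
      rw [h2]
      rw [Finset.sum_congr rfl (fun p _ => h1 p)]
      have h3 : ∑ p : {k // pred k}, v (p : Fin (Kn+1)) • 𝔪.restrict (A p) =
          ∑ k ∈ Finset.univ.filter pred, v k • 𝔪.restrict (A k) := by
        symm
        apply Finset.sum_subtype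
        intro k
        simp [Finset.mem_filter]
      rw [h3]
      symm
      apply Finset.sum_filter_of_ne
      intro k _ hk
      by_contra hp
      have h0 : 𝔪 (A k) = 0 := by
        by_contra h0'
        exact hp (lt_of_le_of_ne zero_le (Ne.symm h0'))
      rw [Measure.restrict_eq_zero.2 h0, smul_zero] at hk
      exact hk rfl
  · -- ae bounds for ρn
    intro n
    refine (ae_restrict_iff' hS).2 (MeasureTheory.ae_of_all _ (fun x hx => ?_))
    exact ⟨le_trans hc'c (hρn_lb n x hx), hρn_ub n x hx⟩
  · -- ae bounds for ρ
    filter_upwards [hbdS] with x hx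
    exact ⟨le_trans hc'c hx.1, le_trans hx.2 hCC'⟩
  · -- W2 convergence
    have hptw : ∀ n x, ENNReal.ofReal (ρ x) -
        min (ENNReal.ofReal (ρn n x)) (ENNReal.ofReal (ρ x)) ≤
        ENNReal.ofReal |ρn n x - ρ x| := by
      intro n x
      rcases le_total (ENNReal.ofReal (ρn n x)) (ENNReal.ofReal (ρ x)) with h | h
      · rw [min_eq_left h, tsub_le_iff_right]
        calc ENNReal.ofReal (ρ x) ≤ ENNReal.ofReal (|ρn n x - ρ x| + ρn n x) := by
              apply ENNReal.ofReal_le_ofReal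
              have := neg_abs_le (ρn n x - ρ x)
              linarith
          _ ≤ ENNReal.ofReal |ρn n x - ρ x| + ENNReal.ofReal (ρn n x) :=
              ENNReal.ofReal_add_le
      · rw [min_eq_right h]
        simp
    have hεb : ∀ n, ∫⁻ x, (ENNReal.ofReal (ρ x) -
        min (ENNReal.ofReal (ρn n x)) (ENNReal.ofReal (ρ x))) ∂𝔪 ≤
        ENNReal.ofReal (K₀ * (1/(n+1))) * 𝔪 S := by
      intro n
      calc ∫⁻ x, (ENNReal.ofReal (ρ x) -
            min (ENNReal.ofReal (ρn n x)) (ENNReal.ofReal (ρ x))) ∂𝔪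
          ≤ ∫⁻ x, ENNReal.ofReal |ρn n x - ρ x| ∂𝔪 := lintegral_mono (hptw n)
        _ = ∫⁻ x in S, ENNReal.ofReal |ρn n x - ρ x| ∂𝔪 :=
            hsplit _ (fun x hx => by rw [hρn0 n x hx, hsupp x hx]; simp)
        _ ≤ ∫⁻ _ in S, ENNReal.ofReal (K₀ * (1/(n+1))) ∂𝔪 := by
            refine lintegral_mono_ae ?_
            filter_upwards [hclose n] with x hx
            exact ENNReal.ofReal_le_ofReal hx
        _ = ENNReal.ofReal (K₀ * (1/(n+1))) * 𝔪 S := setLIntegral_const _ _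
    have hW2sqb : ∀ n, W2sq (𝔪.withDensity fun x => ENNReal.ofReal (ρn n x))
        (𝔪.withDensity fun x => ENNReal.ofReal (ρ x)) ≤
        (EMetric.diam S ^ 2 * 𝔪 S) * ENNReal.ofReal (K₀ * (1/(n+1))) := by
      intro n
      have hprobn : IsProbabilityMeasure (𝔪.withDensity fun x => ENNReal.ofReal (ρn n x)) := by
        constructor
        rw [withDensity_apply _ MeasurableSet.univ, Measure.restrict_univ]
        exact hlint_n n
      refine le_trans (aux_W2sq_le 𝔪 _ _ (hρnm n).ennreal_ofReal hρm.ennreal_ofReal S hS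
        (fun x hx => by rw [hρn0 n x hx]; simp) (fun x hx => by rw [hsupp x hx]; simp)
        hprobn hprob) ?_
      calc EMetric.diam S ^ 2 * ∫⁻ x, (ENNReal.ofReal (ρ x) -
            min (ENNReal.ofReal (ρn n x)) (ENNReal.ofReal (ρ x))) ∂𝔪
          ≤ EMetric.diam S ^ 2 * (ENNReal.ofReal (K₀ * (1/(n+1))) * 𝔪 S) :=
            mul_le_mul_right (hεb n) _
        _ = (EMetric.diam S ^ 2 * 𝔪 S) * ENNReal.ofReal (K₀ * (1/(n+1))) := by ring
    have hfin' : EMetric.diam S ^ 2 * 𝔪 S ≠ ⊤ :=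
      ENNReal.mul_ne_top (ENNReal.pow_ne_top hSb.ediam_ne_top) hMne
    have hlim0 : Tendsto (fun n : ℕ => ENNReal.ofReal (K₀ * (1/(n+1)))) atTop (nhds 0) := by
      have h1 : Tendsto (fun n : ℕ => K₀ * (1/((n:ℝ)+1))) atTop (nhds 0) := by
        simpa using tendsto_one_div_add_atTop_nhds_zero_nat.const_mul K₀
      simpa using ENNReal.tendsto_ofReal h1
    have h1 : Tendsto (fun n : ℕ => (EMetric.diam S ^ 2 * 𝔪 S) *
        ENNReal.ofReal (K₀ * (1/(n+1)))) atTop (nhds 0) := by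
      simpa using ENNReal.Tendsto.const_mul hlim0 (Or.inr hfin')
    have h2 : Tendsto (fun n : ℕ => ((EMetric.diam S ^ 2 * 𝔪 S) *
        ENNReal.ofReal (K₀ * (1/(n+1)))) ^ (1/2 : ℝ)) atTop (nhds 0) := by
      have := (ENNReal.continuous_rpow_const (y := (1/2 : ℝ))).tendsto 0 |>.comp h1
      simpa [ENNReal.zero_rpow_of_pos, Function.comp_def] using this
    refine tendsto_of_tendsto_of_tendsto_of_le_of_le tendsto_const_nhds h2
      (fun n => zero_le) (fun n => ?_)
    rw [W2]
    exact ENNReal.rpow_le_rpow (hW2sqb n) (by norm_num)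
  · -- L1 convergence
    intro N' hN'
    have hN0 : (0:ℝ) < N' := by linarith
    have ha : 0 < 1/N' := by positivity
    have ha1 : 1/N' ≤ 1 := by rw [div_le_one hN0]; linarith
    have hc' : 0 < c * (C*M)⁻¹ := by positivity
    have hFb : ∀ n, ∀ᵐ x ∂𝔪, |ρn n x ^ (-(1/N')) - ρ x ^ (-(1/N'))| ≤
        S.indicator (fun _ => (c * (C*M)⁻¹) ^ (-2*(1/N')) *
          (K₀ * (1/(n+1))) ^ (1/N')) x := by
      intro n
      filter_upwards [hae, (ae_restrict_iff' hS).1 (hclose n)] with x hx1 hx2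
      by_cases hx : x ∈ S
      · rw [Set.indicator_of_mem hx]
        obtain ⟨hl, hu⟩ := hx1 hx
        have h1 : c * (C*M)⁻¹ ≤ ρn n x := le_trans hc'c (hρn_lb n x hx)
        have h2 : c * (C*M)⁻¹ ≤ ρ x := le_trans hc'c hl
        refine le_trans (aux_neg_rpow_sub _ _ _ _ hc' h1 h2 ha ha1) ?_
        refine mul_le_mul_of_nonneg_left ?_ (by positivity)
        exact Real.rpow_le_rpow (abs_nonneg _) (hx2 hx) ha.le
      · rw [Set.indicator_of_notMem hx, hρn0 n x hx, hsupp x hx,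
          Real.zero_rpow (neg_ne_zero.2 (ne_of_gt ha))]
        simp
    have hGint : ∀ n, Integrable (S.indicator (fun _ => (c * (C*M)⁻¹) ^ (-2*(1/N')) *
        (K₀ * (1/(n+1))) ^ (1/N'))) 𝔪 := by
      intro n
      rw [integrable_indicator_iff hS]
      exact integrableOn_const (hfin S hSb).ne
    have hint_le : ∀ n, ∫ x, |ρn n x ^ (-(1/N')) - ρ x ^ (-(1/N'))| ∂𝔪 ≤
        (c * (C*M)⁻¹) ^ (-2*(1/N')) * (K₀ * (1/(n+1))) ^ (1/N') * M := by
      intro n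
      refine le_trans (integral_mono_of_nonneg
        (MeasureTheory.ae_of_all _ (fun x => abs_nonneg _)) (hGint n) (hFb n)) ?_
      rw [integral_indicator_const _ hS, smul_eq_mul]
      apply le_of_eq
      rw [hMdef, measureReal_def]
      ring
    have hb0 : Tendsto (fun n : ℕ => (c * (C*M)⁻¹) ^ (-2*(1/N')) *
        (K₀ * (1/(n+1))) ^ (1/N') * M) atTop (nhds 0) := by
      have h1 : Tendsto (fun n : ℕ => K₀ * (1/((n:ℝ)+1))) atTop (nhds 0) := by
        simpa using tendsto_one_div_add_atTop_nhds_zero_nat.const_mul K₀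
      have h2 : Tendsto (fun n : ℕ => (K₀ * (1/((n:ℝ)+1))) ^ (1/N')) atTop (nhds 0) := by
        have h0 : (0:ℝ) ^ N'⁻¹ = 0 := Real.zero_rpow (inv_ne_zero (ne_of_gt hN0))
        simpa [h0] using h1.rpow_const (p := 1/N') (Or.inr ha.le)
      have h3 := (h2.const_mul ((c * (C*M)⁻¹) ^ (-2*(1/N')))).mul_const M
      simpa using h3
    exact tendsto_of_tendsto_of_tendsto_of_le_of_le tendsto_const_nhds hb0
      (fun n => integral_nonneg (fun x => abs_nonneg _)) hint_le

end
end
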